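/- arXiv:2408.15773 — 10 statements merged into one kernel-verified Lean document; each statement's English description precedes it below -/
import Mathlib

section
/- Let L : ℝ³ → ℝ be C² (arguments written (q, v, t)), let q : ℝ → ℝ be C², and let ξ, δq, Ψ : ℝ → ℝ be C¹ functions of time. Suppose the Noether–Bessel-Hagen equation holds along the trajectory: (∂L/∂t)·ξ(t) + (∂L/∂q)·δq(t) + (∂L/∂v)·(δq'(t) − q̇(t)·ξ'(t)) + L·ξ'(t) = Ψ'(t), where all partial derivatives of L are evaluated at (q(t), q̇(t), t). Define the Noether charge N(t) = Ψ(t) + [(∂L/∂v)·q̇(t) − L]·ξ(t) − (∂L/∂v)·δq(t). Then for every t, N'(t) = (δq(t) − ξ(t)·q̇(t)) · [ (∂L/∂q) − d/dt((∂L/∂v)(q(t), q̇(t), t)) ]. -/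
/-- Noether's theorem (off shell, Lagrangian form): if the Noether–Bessel-Hagen
equation holds along the trajectory, then the Noether charge
`N = Ψ + (∂L/∂v · q̇ − L)·ξ − ∂L/∂v · δq` satisfies
`N' = (δq − ξ·q̇)·(∂L/∂q − d/dt(∂L/∂v))`. -/
theorem stmt_3
    (L : ℝ → ℝ → ℝ → ℝ)
    (hL : ContDiff ℝ 2 (fun x : ℝ × ℝ × ℝ => L x.1 x.2.1 x.2.2))
    (q : ℝ → ℝ) (hq : ContDiff ℝ 2 q)
    (ξ δq Ψ : ℝ → ℝ)
    (hξ : ContDiff ℝ 1 ξ) (hδq : ContDiff ℝ 1 δq) (hΨ : ContDiff ℝ 1 Ψ)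
    (hNBH : ∀ t : ℝ,
      deriv (fun s => L (q t) (deriv q t) s) t * ξ t
      + deriv (fun x => L x (deriv q t) t) (q t) * δq t
      + deriv (fun v => L (q t) v t) (deriv q t)
          * (deriv δq t - deriv q t * deriv ξ t)
      + L (q t) (deriv q t) t * deriv ξ t
      = deriv Ψ t)
    (N : ℝ → ℝ)
    (hN : N = fun t => Ψ t
      + (deriv (fun v => L (q t) v t) (deriv q t) * deriv q t
          - L (q t) (deriv q t) t) * ξ t
      - deriv (fun v => L (q t) v t) (deriv q t) * δq t) :
    ∀ t : ℝ, deriv N t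
      = (δq t - ξ t * deriv q t)
        * (deriv (fun x => L x (deriv q t) t) (q t)
            - deriv (fun s => deriv (fun v => L (q s) v s) (deriv q s)) t) := by
  set F : ℝ × ℝ × ℝ → ℝ := fun x => L x.1 x.2.1 x.2.2 with hFdef
  have hFd : Differentiable ℝ F := hL.differentiable (by norm_num)
  -- partial derivative lemmas
  have hdq : ∀ x v s : ℝ, HasDerivAt (fun x' => L x' v s)
      (fderiv ℝ F (x, v, s) (1, 0, 0)) x := by
    intro x v s
    have h1 : HasDerivAt (fun x' : ℝ => ((x', v, s) : ℝ × ℝ × ℝ)) (1, 0, 0) x :=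
      (hasDerivAt_id x).prodMk ((hasDerivAt_const x v).prodMk (hasDerivAt_const x s))
    exact (hFd (x, v, s)).hasFDerivAt.comp_hasDerivAt x h1
  have hdv : ∀ x v s : ℝ, HasDerivAt (fun v' => L x v' s)
      (fderiv ℝ F (x, v, s) (0, 1, 0)) v := by
    intro x v s
    have h1 : HasDerivAt (fun v' : ℝ => ((x, v', s) : ℝ × ℝ × ℝ)) (0, 1, 0) v :=
      (hasDerivAt_const v x).prodMk ((hasDerivAt_id v).prodMk (hasDerivAt_const v s))
    exact (hFd (x, v, s)).hasFDerivAt.comp_hasDerivAt v h1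
  have hdt : ∀ x v s : ℝ, HasDerivAt (fun s' => L x v s')
      (fderiv ℝ F (x, v, s) (0, 0, 1)) s := by
    intro x v s
    have h1 : HasDerivAt (fun s' : ℝ => ((x, v, s') : ℝ × ℝ × ℝ)) (0, 0, 1) s :=
      (hasDerivAt_const s x).prodMk ((hasDerivAt_const s v).prodMk (hasDerivAt_id s))
    exact (hFd (x, v, s)).hasFDerivAt.comp_hasDerivAt s h1
  set p : ℝ → ℝ := fun s => fderiv ℝ F (q s, deriv q s, s) (0, 1, 0) with hpdef
  have pN : ∀ s : ℝ, deriv (fun v => L (q s) v s) (deriv q s) = p s :=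
    fun s => (hdv (q s) (deriv q s) s).deriv
  have hq1 : Differentiable ℝ q := hq.differentiable (by norm_num)
  have hq' : ContDiff ℝ 1 (deriv q) := (contDiff_succ_iff_deriv.mp (show ContDiff ℝ (1+1) q by norm_num [one_add_one_eq_two]; exact hq)).2.2
  have hq'd : Differentiable ℝ (deriv q) := hq'.differentiable (by norm_num)
  -- p is C¹
  have hfd1 : ContDiff ℝ 1 (fderiv ℝ F) := hL.fderiv_right (by norm_num)
  have htraj : ContDiff ℝ 1 (fun s : ℝ => ((q s, deriv q s, s) : ℝ × ℝ × ℝ)) :=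
    ContDiff.prodMk (hq.of_le one_le_two) (hq'.prodMk contDiff_id)
  have hp1 : ContDiff ℝ 1 p := by
    have := ((ContinuousLinearMap.apply ℝ ℝ ((0:ℝ), (1:ℝ), (0:ℝ))).contDiff.comp
      (hfd1.comp htraj))
    exact this
  -- derivatives at t
  intro t
  have hqd : HasDerivAt q (deriv q t) t := (hq1 t).hasDerivAt
  have hq'dd : HasDerivAt (deriv q) (deriv (deriv q) t) t := (hq'd t).hasDerivAt
  have htd : HasDerivAt (fun s : ℝ => ((q s, deriv q s, s) : ℝ × ℝ × ℝ))
      (deriv q t, deriv (deriv q) t, 1) t :=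
    hqd.prodMk (hq'dd.prodMk (hasDerivAt_id t))
  have hFtraj : HasDerivAt (fun s => F (q s, deriv q s, s))
      (fderiv ℝ F (q t, deriv q t, t) (deriv q t, deriv (deriv q) t, 1)) t :=
    (hFd _).hasFDerivAt.comp_hasDerivAt t htd
  have hdec : fderiv ℝ F (q t, deriv q t, t) (deriv q t, deriv (deriv q) t, 1)
      = deriv q t * fderiv ℝ F (q t, deriv q t, t) (1, 0, 0)
        + deriv (deriv q) t * fderiv ℝ F (q t, deriv q t, t) (0, 1, 0)
        + fderiv ℝ F (q t, deriv q t, t) (0, 0, 1) := by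
    have hvec : ((deriv q t, deriv (deriv q) t, (1:ℝ)) : ℝ × ℝ × ℝ)
        = deriv q t • ((1:ℝ), (0:ℝ), (0:ℝ)) + deriv (deriv q) t • ((0:ℝ), (1:ℝ), (0:ℝ))
          + ((0:ℝ), (0:ℝ), (1:ℝ)) := by
      simp [Prod.ext_iff]
    rw [hvec, map_add, map_add, map_smul, map_smul, smul_eq_mul, smul_eq_mul]
  have hpd : HasDerivAt p (deriv p t) t := ((hp1.differentiable (by norm_num)) t).hasDerivAt
  have hΨd : HasDerivAt Ψ (deriv Ψ t) t := ((hΨ.differentiable (by norm_num)) t).hasDerivAt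
  have hξd : HasDerivAt ξ (deriv ξ t) t := ((hξ.differentiable (by norm_num)) t).hasDerivAt
  have hδqd : HasDerivAt δq (deriv δq t) t := ((hδq.differentiable (by norm_num)) t).hasDerivAt
  -- rewrite N
  have hN' : N = fun s => Ψ s + (p s * deriv q s - F (q s, deriv q s, s)) * ξ s - p s * δq s := by
    rw [hN]; funext s; rw [pN s]
  have hNd : HasDerivAt N
      (deriv Ψ t
        + ((deriv p t * deriv q t + p t * deriv (deriv q) t
            - fderiv ℝ F (q t, deriv q t, t) (deriv q t, deriv (deriv q) t, 1)) * ξ t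
          + (p t * deriv q t - F (q t, deriv q t, t)) * deriv ξ t)
        - (deriv p t * δq t + p t * deriv δq t)) t := by
    rw [hN']
    exact (hΨd.add (((hpd.mul hq'dd).sub hFtraj).mul hξd)).sub (hpd.mul hδqd)
  have eΨ := hNBH t
  rw [(hdt (q t) (deriv q t) t).deriv, (hdq (q t) (deriv q t) t).deriv, pN t] at eΨ
  have hRq : deriv (fun x => L x (deriv q t) t) (q t)
      = fderiv ℝ F (q t, deriv q t, t) (1, 0, 0) := (hdq (q t) (deriv q t) t).deriv
  have hRp : (fun s => deriv (fun v => L (q s) v s) (deriv q s)) = p := funext pN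
  rw [hNd.deriv, hRq, hRp, hdec]
  have hpt : p t = fderiv ℝ F (q t, deriv q t, t) (0, 1, 0) := rfl
  rw [hpt]
  linear_combination -eΨ
end

section
/- Let L : ℝ³ → ℝ be C² (arguments written (q, v, t)), let q : ℝ → ℝ be C², and let ξ, δq, Ψ : ℝ → ℝ be C¹. Suppose both (i) the Noether–Bessel-Hagen equation holds along the trajectory: (∂L/∂t)·ξ(t) + (∂L/∂q)·δq(t) + (∂L/∂v)·(δq'(t) − q̇(t)·ξ'(t)) + L·ξ'(t) = Ψ'(t), and (ii) the trajectory is on shell, i.e. it satisfies the Euler–Lagrange equation d/dt[(∂L/∂v)(q(t), q̇(t), t)] = (∂L/∂q)(q(t), q̇(t), t) for all t. Then the Noether charge N(t) = Ψ(t) + [(∂L/∂v)·q̇(t) − L]·ξ(t) − (∂L/∂v)·δq(t) is constant in t. -/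
/-- Noether's theorem (on shell): if the Noether–Bessel-Hagen equation holds and
the trajectory satisfies the Euler–Lagrange equation, then the Noether charge
`N = Ψ + (∂L/∂v · q̇ − L)·ξ − ∂L/∂v · δq` is constant in time. -/
theorem stmt_4
    (L : ℝ → ℝ → ℝ → ℝ)
    (hL : ContDiff ℝ 2 (fun x : ℝ × ℝ × ℝ => L x.1 x.2.1 x.2.2))
    (q : ℝ → ℝ) (hq : ContDiff ℝ 2 q)
    (ξ δq Ψ : ℝ → ℝ)
    (hξ : ContDiff ℝ 1 ξ) (hδq : ContDiff ℝ 1 δq) (hΨ : ContDiff ℝ 1 Ψ)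
    (hNBH : ∀ t : ℝ,
      deriv (fun s => L (q t) (deriv q t) s) t * ξ t
      + deriv (fun x => L x (deriv q t) t) (q t) * δq t
      + deriv (fun v => L (q t) v t) (deriv q t)
          * (deriv δq t - deriv q t * deriv ξ t)
      + L (q t) (deriv q t) t * deriv ξ t
      = deriv Ψ t)
    (hEL : ∀ t : ℝ,
      deriv (fun s => deriv (fun v => L (q s) v s) (deriv q s)) t
        = deriv (fun x => L x (deriv q t) t) (q t))
    (N : ℝ → ℝ)
    (hN : N = fun t => Ψ t
      + (deriv (fun v => L (q t) v t) (deriv q t) * deriv q t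
          - L (q t) (deriv q t) t) * ξ t
      - deriv (fun v => L (q t) v t) (deriv q t) * δq t) :
    ∀ t₁ t₂ : ℝ, N t₁ = N t₂ := by
  subst hN
  set F : ℝ × ℝ × ℝ → ℝ := fun x => L x.1 x.2.1 x.2.2 with hF
  have hFd : Differentiable ℝ F := hL.differentiable (by norm_num)
  -- slice derivatives
  have key1 : ∀ a v t : ℝ, HasDerivAt (fun x => L x v t)
      (fderiv ℝ F (a, v, t) (1, 0, 0)) a := by
    intro a v t
    have h1 : HasDerivAt (fun x : ℝ => ((x, v, t) : ℝ × ℝ × ℝ)) ((1 : ℝ), (0:ℝ), (0:ℝ)) a :=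
      (hasDerivAt_id a).prodMk ((hasDerivAt_const a v).prodMk (hasDerivAt_const a t))
    exact (hFd (a, v, t)).hasFDerivAt.comp_hasDerivAt a h1
  have key2 : ∀ a v t : ℝ, HasDerivAt (fun w => L a w t)
      (fderiv ℝ F (a, v, t) (0, 1, 0)) v := by
    intro a v t
    have h1 : HasDerivAt (fun w : ℝ => ((a, w, t) : ℝ × ℝ × ℝ)) ((0 : ℝ), (1:ℝ), (0:ℝ)) v :=
      (hasDerivAt_const v a).prodMk ((hasDerivAt_id v).prodMk (hasDerivAt_const v t))
    exact (hFd (a, v, t)).hasFDerivAt.comp_hasDerivAt v h1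
  have key3 : ∀ a v t : ℝ, HasDerivAt (fun s => L a v s)
      (fderiv ℝ F (a, v, t) (0, 0, 1)) t := by
    intro a v t
    have h1 : HasDerivAt (fun s : ℝ => ((a, v, s) : ℝ × ℝ × ℝ)) ((0 : ℝ), (0:ℝ), (1:ℝ)) t :=
      (hasDerivAt_const t a).prodMk ((hasDerivAt_const t v).prodMk (hasDerivAt_id t))
    exact (hFd (a, v, t)).hasFDerivAt.comp_hasDerivAt t h1
  -- q and its derivatives
  have hq2 : ContDiff ℝ ((1 : ℕ) + 1) q := by exact_mod_cast hq
  have hqd : Differentiable ℝ q := hq.differentiable (by norm_num)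
  have hq' : ContDiff ℝ 1 (deriv q) := (contDiff_succ_iff_deriv.mp hq2).2.2
  have hq'd : Differentiable ℝ (deriv q) := hq'.differentiable (by norm_num)
  -- the curve γ
  have hγt : ∀ t : ℝ, HasDerivAt (fun s => ((q s, deriv q s, s) : ℝ × ℝ × ℝ))
      (deriv q t, deriv (deriv q) t, 1) t := fun t =>
    ((hqd t).hasDerivAt).prodMk (((hq'd t).hasDerivAt).prodMk (hasDerivAt_id t))
  have hγC : ContDiff ℝ 1 (fun s => ((q s, deriv q s, s) : ℝ × ℝ × ℝ)) :=
    (hq.of_le one_le_two).prodMk (hq'.prodMk contDiff_id)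
  -- p = ∂L/∂v along the trajectory, is C¹
  set p : ℝ → ℝ := fun t => fderiv ℝ F (q t, deriv q t, t) (0, 1, 0) with hp
  have hpev : ContDiff ℝ 1 (fun x : ℝ × ℝ × ℝ => fderiv ℝ F x ((0:ℝ), (1:ℝ), (0:ℝ))) :=
    (ContinuousLinearMap.apply ℝ ℝ ((0:ℝ), (1:ℝ), (0:ℝ))).contDiff.comp
      (hL.fderiv_right (by norm_num))
  have hpC : ContDiff ℝ 1 p := hpev.comp hγC
  have hpd : Differentiable ℝ p := hpC.differentiable (by norm_num)
  -- rewrite the statement's deriv expressions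
  have e2 : ∀ t : ℝ, deriv (fun v => L (q t) v t) (deriv q t) = p t := fun t =>
    (key2 (q t) (deriv q t) t).deriv
  have e1 : ∀ t : ℝ, deriv (fun x => L x (deriv q t) t) (q t)
      = fderiv ℝ F (q t, deriv q t, t) (1, 0, 0) := fun t => (key1 (q t) (deriv q t) t).deriv
  have e3 : ∀ t : ℝ, deriv (fun s => L (q t) (deriv q t) s) t
      = fderiv ℝ F (q t, deriv q t, t) (0, 0, 1) := fun t => (key3 (q t) (deriv q t) t).deriv
  -- Euler–Lagrange in p form
  have hEL' : ∀ t : ℝ, deriv p t = fderiv ℝ F (q t, deriv q t, t) (1, 0, 0) := by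
    intro t
    have := hEL t
    rw [e1] at this
    rw [← this]
    congr 1
    funext s
    exact (e2 s).symm
  -- derivative of L along the trajectory
  have hΛ : ∀ t : ℝ, HasDerivAt (fun s => L (q s) (deriv q s) s)
      (fderiv ℝ F (q t, deriv q t, t) (deriv q t, deriv (deriv q) t, 1)) t := fun t =>
    (hFd _).hasFDerivAt.comp_hasDerivAt t (hγt t)
  -- decompose the directional derivative
  have hlin : ∀ t : ℝ, fderiv ℝ F (q t, deriv q t, t) (deriv q t, deriv (deriv q) t, 1)
      = deriv q t * fderiv ℝ F (q t, deriv q t, t) (1, 0, 0)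
        + deriv (deriv q) t * p t
        + fderiv ℝ F (q t, deriv q t, t) (0, 0, 1) := by
    intro t
    have : ((deriv q t, deriv (deriv q) t, 1) : ℝ × ℝ × ℝ)
        = deriv q t • ((1:ℝ), (0:ℝ), (0:ℝ)) + deriv (deriv q) t • ((0:ℝ), (1:ℝ), (0:ℝ))
          + ((0:ℝ), (0:ℝ), (1:ℝ)) := by
      simp [Prod.ext_iff]
    rw [this, map_add, map_add, map_smul, map_smul]
    simp [hp, smul_eq_mul]
  -- N has derivative 0 everywhere
  have hN0 : ∀ t : ℝ, HasDerivAt (fun t => Ψ t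
      + (deriv (fun v => L (q t) v t) (deriv q t) * deriv q t
          - L (q t) (deriv q t) t) * ξ t
      - deriv (fun v => L (q t) v t) (deriv q t) * δq t) 0 t := by
    intro t
    have hΨt : HasDerivAt Ψ (deriv Ψ t) t := (hΨ.differentiable (by norm_num) t).hasDerivAt
    have hξt : HasDerivAt ξ (deriv ξ t) t := (hξ.differentiable (by norm_num) t).hasDerivAt
    have hδt : HasDerivAt δq (deriv δq t) t := (hδq.differentiable (by norm_num) t).hasDerivAt
    have hpt : HasDerivAt p (deriv p t) t := (hpd t).hasDerivAt
    have hqt : HasDerivAt (deriv q) (deriv (deriv q) t) t := (hq'd t).hasDerivAt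
    have hNe : (fun t => Ψ t
        + (deriv (fun v => L (q t) v t) (deriv q t) * deriv q t
            - L (q t) (deriv q t) t) * ξ t
        - deriv (fun v => L (q t) v t) (deriv q t) * δq t)
        = fun t => Ψ t + (p t * deriv q t - L (q t) (deriv q t) t) * ξ t - p t * δq t := by
      funext s; rw [e2 s]
    rw [hNe]
    have H : HasDerivAt (fun t => Ψ t + (p t * deriv q t - L (q t) (deriv q t) t) * ξ t
        - p t * δq t)
        (deriv Ψ t
          + ((deriv p t * deriv q t + p t * deriv (deriv q) t
              - fderiv ℝ F (q t, deriv q t, t) (deriv q t, deriv (deriv q) t, 1)) * ξ t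
            + (p t * deriv q t - L (q t) (deriv q t) t) * deriv ξ t)
          - (deriv p t * δq t + p t * deriv δq t)) t :=
      (hΨt.add ((((hpt.mul hqt).sub (hΛ t)).mul hξt))).sub (hpt.mul hδt)
    convert H using 1
    have nbh := hNBH t
    rw [e1, e2, e3] at nbh
    rw [hlin t, hEL' t]
    linear_combination nbh
  have hdiff : Differentiable ℝ (fun t => Ψ t
      + (deriv (fun v => L (q t) v t) (deriv q t) * deriv q t
          - L (q t) (deriv q t) t) * ξ t
      - deriv (fun v => L (q t) v t) (deriv q t) * δq t) := fun t =>
    (hN0 t).differentiableAt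
  intro t₁ t₂
  exact is_const_of_deriv_eq_zero hdiff (fun t => (hN0 t).deriv) t₁ t₂
end

section
/- Let L : ℝ³ → ℝ be C² (arguments written (q, v, λ)), let q : ℝ → ℝ be C², λ : ℝ → ℝ be C¹, and let ξ, Ψ : ℝ → ℝ be C¹. Define the energy E(t) = (∂L/∂v)(q(t), q̇(t), λ(t))·q̇(t) − L(q(t), q̇(t), λ(t)). Then the following are equivalent: (i) the Noether–Bessel-Hagen equation with δq = 0 holds along the trajectory, i.e. (∂L/∂λ)·λ̇(t)·ξ(t) − (∂L/∂v)·q̇(t)·ξ'(t) + L·ξ'(t) = Ψ'(t) (partial derivatives of L evaluated at (q(t), q̇(t), λ(t))); (ii) ξ(t)·[dE/dt(t) + (∂L/∂λ)(q(t), q̇(t), λ(t))·λ̇(t)] = d/dt[Ψ(t) + ξ(t)·E(t)] for all t. In other words, under a pure (generally non-uniform) time translation, the quasisymmetry condition is exactly the statement that the Noether charge N = Ψ + ξE satisfies dN/dt = ξ·(dE/dt + ∂_λL·λ̇), the First-Law form. -/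
/-- Under a pure (non-uniform) time translation `t → t + η·ξ(t)` (with `δq = 0`),
the Noether–Bessel-Hagen quasisymmetry condition is equivalent to the First-Law
form `ξ·(dE/dt + ∂_λL·λ̇) = d/dt(Ψ + ξ·E)` for the Noether charge `N = Ψ + ξE`. -/
theorem stmt_5
    (L : ℝ → ℝ → ℝ → ℝ)
    (hL : ContDiff ℝ 2 (fun x : ℝ × ℝ × ℝ => L x.1 x.2.1 x.2.2))
    (q : ℝ → ℝ) (hq : ContDiff ℝ 2 q)
    (lam ξ Ψ : ℝ → ℝ)
    (hlam : ContDiff ℝ 1 lam) (hξ : ContDiff ℝ 1 ξ) (hΨ : ContDiff ℝ 1 Ψ)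
    (E : ℝ → ℝ)
    (hE : E = fun t =>
      deriv (fun v => L (q t) v (lam t)) (deriv q t) * deriv q t
        - L (q t) (deriv q t) (lam t)) :
    (∀ t : ℝ,
      deriv (fun l => L (q t) (deriv q t) l) (lam t) * deriv lam t * ξ t
        - deriv (fun v => L (q t) v (lam t)) (deriv q t) * deriv q t * deriv ξ t
        + L (q t) (deriv q t) (lam t) * deriv ξ t
      = deriv Ψ t)
    ↔ (∀ t : ℝ,
      ξ t * (deriv E t
          + deriv (fun l => L (q t) (deriv q t) l) (lam t) * deriv lam t)
      = deriv (fun s => Ψ s + ξ s * E s) t) := by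
  set F : ℝ × ℝ × ℝ → ℝ := fun x => L x.1 x.2.1 x.2.2 with hF
  have hFd : Differentiable ℝ F := hL.differentiable (by norm_num)
  -- partial derivative in v as fderiv evaluation
  have key : ∀ a b c : ℝ,
      deriv (fun v => L a v c) b = fderiv ℝ F (a, b, c) (0, 1, 0) := by
    intro a b c
    have hlin : HasDerivAt (fun v : ℝ => ((a, v, c) : ℝ × ℝ × ℝ))
        ((0, 1, 0) : ℝ × ℝ × ℝ) b := by
      have h1 : HasDerivAt (fun _ : ℝ => a) 0 b := hasDerivAt_const _ _
      have h2 : HasDerivAt (fun v : ℝ => v) 1 b := hasDerivAt_id _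
      have h3 : HasDerivAt (fun _ : ℝ => c) 0 b := hasDerivAt_const _ _
      exact h1.prodMk (h2.prodMk h3)
    have := ((hFd (a, b, c)).hasFDerivAt.comp_hasDerivAt b hlin)
    exact this.deriv
  -- deriv q is C¹
  have hdq : ContDiff ℝ 1 (deriv q) := by
    have := (hq.fderiv_right (m := 1) (by norm_num)).clm_apply contDiff_const
        (g := fun _ => (1 : ℝ))
    have heq : (fun t => fderiv ℝ q t 1) = deriv q := by
      funext t; exact fderiv_apply_one_eq_deriv
    rwa [heq] at this
  -- the curve t ↦ (q t, q̇ t, λ t) is C¹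
  have hcurve : ContDiff ℝ 1 (fun t => ((q t, deriv q t, lam t) : ℝ × ℝ × ℝ)) :=
    (hq.of_le (by norm_num)).prodMk (hdq.prodMk hlam)
  -- E is C¹
  have hE1 : ContDiff ℝ 1 E := by
    rw [hE]
    have h1 : ContDiff ℝ 1 (fun x : ℝ × ℝ × ℝ => fderiv ℝ F x (0, 1, 0)) :=
      (hL.fderiv_right (m := 1) (by norm_num)).clm_apply contDiff_const
    have h2 : ContDiff ℝ 1 (fun t =>
        fderiv ℝ F (q t, deriv q t, lam t) ((0, 1, 0) : ℝ × ℝ × ℝ)) :=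
      h1.comp hcurve
    have h3 : ContDiff ℝ 1 (fun t => F (q t, deriv q t, lam t)) :=
      (hL.of_le (by norm_num)).comp hcurve
    have heq : (fun t =>
        deriv (fun v => L (q t) v (lam t)) (deriv q t) * deriv q t
          - L (q t) (deriv q t) (lam t))
      = fun t => fderiv ℝ F (q t, deriv q t, lam t) ((0,1,0) : ℝ × ℝ × ℝ) * deriv q t
          - F (q t, deriv q t, lam t) := by
      funext t; rw [key]
    rw [heq]
    exact (h2.mul hdq).sub h3
  have hEdiff : Differentiable ℝ E := hE1.differentiable one_ne_zero
  -- derivative of Ψ + ξ·E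
  have hderivN : ∀ t, deriv (fun s => Ψ s + ξ s * E s) t
      = deriv Ψ t + (deriv ξ t * E t + ξ t * deriv E t) := by
    intro t
    have h1 : HasDerivAt Ψ (deriv Ψ t) t :=
      (hΨ.differentiable one_ne_zero t).hasDerivAt
    have h2 : HasDerivAt ξ (deriv ξ t) t :=
      (hξ.differentiable one_ne_zero t).hasDerivAt
    have h3 : HasDerivAt E (deriv E t) t := (hEdiff t).hasDerivAt
    exact (h1.add (h2.mul h3)).deriv
  have hEval : ∀ t, E t = deriv (fun v => L (q t) v (lam t)) (deriv q t) * deriv q t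
      - L (q t) (deriv q t) (lam t) := by intro t; rw [hE]
  constructor
  · intro h t
    rw [hderivN t, ← h t, hEval t]
    ring
  · intro h t
    have := h t
    rw [hderivN t, hEval t] at this
    nlinarith [this]
end

section
/- Let L, ξ, δq, Ψ : ℝ³ → ℝ be C¹ (arguments written (q, v, t)). Then the following are equivalent: (I) for every C² curve q : ℝ → ℝ and every t, the Noether–Bessel-Hagen equation holds along the curve, where total time derivatives of ξ, δq, Ψ along the curve are D_t f = ∂f/∂t + (∂f/∂q)·q̇ + (∂f/∂v)·q̈ evaluated at (q(t), q̇(t), t): (∂L/∂t)·ξ + (∂L/∂q)·δq + (∂L/∂v)·(D_t δq − q̇·D_t ξ) + L·D_t ξ = D_t Ψ; (II) the two generalized Killing equations hold at every point (q, v, t): (1) L·(∂ξ/∂v) + (∂L/∂v)·((∂δq/∂v) − v·(∂ξ/∂v)) = ∂Ψ/∂v, and (2) (∂L/∂t)·ξ + (∂L/∂q)·δq + (∂L/∂v)·(∂δq/∂t + v·(∂δq/∂q) − v·(∂ξ/∂t + v·(∂ξ/∂q))) + L·(∂ξ/∂t + v·(∂ξ/∂q)) = ∂Ψ/∂t + v·(∂Ψ/∂q).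 (The Noether–Bessel-Hagen expression is affine in the acceleration q̈, so it vanishes along all curves exactly when the coefficient of q̈ and the remaining part vanish separately.) -/
/-- Partial derivative in the first (coordinate) argument. -/
noncomputable def pQ (f : ℝ → ℝ → ℝ → ℝ) (a b c : ℝ) : ℝ := deriv (fun x => f x b c) a

/-- Partial derivative in the second (velocity) argument. -/
noncomputable def pV (f : ℝ → ℝ → ℝ → ℝ) (a b c : ℝ) : ℝ := deriv (fun v => f a v c) b

/-- Partial derivative in the third (time) argument. -/
noncomputable def pT (f : ℝ → ℝ → ℝ → ℝ) (a b c : ℝ) : ℝ := deriv (fun s => f a b s) c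

/-- Total time derivative along a curve: `D_t f = ∂f/∂t + ∂f/∂q·q̇ + ∂f/∂v·q̈`,
evaluated at `(a, b, c) = (q(t), q̇(t), t)` with acceleration `w = q̈(t)`. -/
noncomputable def Dt (f : ℝ → ℝ → ℝ → ℝ) (a b c w : ℝ) : ℝ :=
  pT f a b c + pQ f a b c * b + pV f a b c * w

private lemma quad_curve (a b c w : ℝ) :
    ∃ q : ℝ → ℝ, ContDiff ℝ 2 q ∧ q c = a ∧ deriv q c = b ∧ deriv (deriv q) c = w := by
  refine ⟨fun t => a + b * (t - c) + w / 2 * (t - c) ^ 2, ?_, by ring, ?_, ?_⟩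
  · apply ContDiff.add
    · exact contDiff_const.add (contDiff_const.mul (contDiff_id.sub contDiff_const))
    · exact contDiff_const.mul ((contDiff_id.sub contDiff_const).pow 2)
  · have hd : ∀ t : ℝ, HasDerivAt (fun t => a + b * (t - c) + w / 2 * (t - c) ^ 2)
        (b + w * (t - c)) t := by
      intro t
      have h1 : HasDerivAt (fun t : ℝ => t - c) 1 t := (hasDerivAt_id t).sub_const c
      have : HasDerivAt (fun t => a + b * (t - c) + w / 2 * (t - c) ^ 2)
          (b * 1 + w / 2 * (((2 : ℕ) : ℝ) * (t - c) ^ (2 - 1) * 1)) t :=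
        ((h1.const_mul b).const_add a).add ((h1.pow 2).const_mul (w / 2))
      convert this using 1
      norm_num
      ring
    rw [(hd c).deriv]; ring
  · have hd : ∀ t : ℝ, HasDerivAt (fun t => a + b * (t - c) + w / 2 * (t - c) ^ 2)
        (b + w * (t - c)) t := by
      intro t
      have h1 : HasDerivAt (fun t : ℝ => t - c) 1 t := (hasDerivAt_id t).sub_const c
      have : HasDerivAt (fun t => a + b * (t - c) + w / 2 * (t - c) ^ 2)
          (b * 1 + w / 2 * (((2 : ℕ) : ℝ) * (t - c) ^ (2 - 1) * 1)) t :=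
        ((h1.const_mul b).const_add a).add ((h1.pow 2).const_mul (w / 2))
      convert this using 1
      norm_num
      ring
    have hderiv : deriv (fun t => a + b * (t - c) + w / 2 * (t - c) ^ 2)
        = fun t => b + w * (t - c) := funext fun t => (hd t).deriv
    rw [hderiv]
    have h2 : HasDerivAt (fun t : ℝ => b + w * (t - c)) w c := by
      simpa using (((hasDerivAt_id c).sub_const c).const_mul w).const_add b
    rw [h2.deriv]

/-- The Noether–Bessel-Hagen equation holds along every C² curve if and only if
the two generalized Killing equations hold at every point `(q, v, t)`. -/
theorem stmt_6
    (L ξ δq Ψ : ℝ → ℝ → ℝ → ℝ)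
    (hL : ContDiff ℝ 1 (fun x : ℝ × ℝ × ℝ => L x.1 x.2.1 x.2.2))
    (hξ : ContDiff ℝ 1 (fun x : ℝ × ℝ × ℝ => ξ x.1 x.2.1 x.2.2))
    (hδq : ContDiff ℝ 1 (fun x : ℝ × ℝ × ℝ => δq x.1 x.2.1 x.2.2))
    (hΨ : ContDiff ℝ 1 (fun x : ℝ × ℝ × ℝ => Ψ x.1 x.2.1 x.2.2)) :
    (∀ q : ℝ → ℝ, ContDiff ℝ 2 q → ∀ t : ℝ,
      pT L (q t) (deriv q t) t * ξ (q t) (deriv q t) t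
      + pQ L (q t) (deriv q t) t * δq (q t) (deriv q t) t
      + pV L (q t) (deriv q t) t *
          (Dt δq (q t) (deriv q t) t (deriv (deriv q) t)
            - deriv q t * Dt ξ (q t) (deriv q t) t (deriv (deriv q) t))
      + L (q t) (deriv q t) t * Dt ξ (q t) (deriv q t) t (deriv (deriv q) t)
      = Dt Ψ (q t) (deriv q t) t (deriv (deriv q) t))
    ↔ (∀ a b c : ℝ,
      (L a b c * pV ξ a b c
          + pV L a b c * (pV δq a b c - b * pV ξ a b c)
        = pV Ψ a b c)
      ∧ (pT L a b c * ξ a b c + pQ L a b c * δq a b c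
          + pV L a b c *
              (pT δq a b c + b * pQ δq a b c - b * (pT ξ a b c + b * pQ ξ a b c))
          + L a b c * (pT ξ a b c + b * pQ ξ a b c)
        = pT Ψ a b c + b * pQ Ψ a b c)) := by
  constructor
  · intro h a b c
    have key : ∀ w : ℝ,
        pT L a b c * ξ a b c + pQ L a b c * δq a b c
        + pV L a b c * (Dt δq a b c w - b * Dt ξ a b c w)
        + L a b c * Dt ξ a b c w = Dt Ψ a b c w := by
      intro w
      obtain ⟨q, hq, hq0, hq1, hq2⟩ := quad_curve a b c w
      have := h q hq c
      rw [hq0, hq1, hq2] at this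
      exact this
    have k0 := key 0
    have k1 := key 1
    simp only [Dt] at k0 k1
    constructor
    · nlinarith [k0, k1]
    · nlinarith [k0]
  · intro h q hq t
    obtain ⟨h1, h2⟩ := h (q t) (deriv q t) t
    simp only [Dt]
    linear_combination (deriv (deriv q) t) * h1 + h2
end

section
/- Let n ≥ 1, let g : ℝⁿ → Matrix n×n ℝ be a C¹ map with g(q) symmetric for every q, and let X : ℝⁿ → ℝⁿ be C¹ satisfying the coordinate Killing equations: for all q ∈ ℝⁿ and all indices i, l, Σ_k [ (∂g_{il}/∂q^k)(q)·X^k(q) + g_{ik}(q)·(∂X^k/∂q^l)(q) + g_{kl}(q)·(∂X^k/∂q^i)(q) ] = 0. Let q : ℝ → ℝⁿ be a C² solution of the Euler–Lagrange equations of the kinetic Lagrangian L(q, v) = ½ Σ_{k,l} g_{kl}(q) v^k v^l, i.e. for each index i and all t: d/dt[ Σ_k g_{ik}(q(t))·q̇^k(t) ] = ½ Σ_{k,l} (∂g_{kl}/∂q^i)(q(t))·q̇^k(t)·q̇^l(t). Then the Noether charge t ↦ Σ_{i,k} g_{ik}(q(t))·q̇^k(t)·X^i(q(t)) is constant in t.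 -/
open Finset

private lemma clm_pi_expand {n : ℕ} (φ : (Fin n → ℝ) →L[ℝ] ℝ) (v : Fin n → ℝ) :
    φ v = ∑ l, v l * φ (Pi.single l 1) := by
  have hv : v = ∑ l, v l • (Pi.single l 1 : Fin n → ℝ) := by
    ext j
    simp [Pi.single_apply]
  conv_lhs => rw [hv]
  rw [map_sum]
  simp [smul_eq_mul]

private lemma rot3 {α : Type*} [Fintype α] (f : α → α → α → ℝ) :
    ∑ a, ∑ b, ∑ c, f b c a = ∑ a, ∑ b, ∑ c, f a b c := by
  rw [Finset.sum_comm]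
  exact Finset.sum_congr rfl fun b _ => Finset.sum_comm

private lemma swp13 {α : Type*} [Fintype α] (f : α → α → α → ℝ) :
    ∑ a, ∑ b, ∑ c, f c b a = ∑ a, ∑ b, ∑ c, f a b c := by
  have h1 : ∑ a, ∑ b, ∑ c, f c b a = ∑ a, ∑ b, ∑ c, f b c a :=
    Finset.sum_congr rfl fun a _ => Finset.sum_comm
  rw [h1, rot3]

private lemma stmt7_alg {n : ℕ} (G : Fin n → Fin n → ℝ) (Gd : Fin n → Fin n → Fin n → ℝ)
    (D : Fin n → Fin n → ℝ) (v Xv : Fin n → ℝ)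
    (hs : ∀ i k, G i k = G k i) :
    ∑ i, (((1/2 : ℝ) * ∑ k, ∑ l, Gd k l i * v k * v l) * Xv i
      + (∑ k, G i k * v k) * (∑ l, v l * D i l))
    = ∑ i, ∑ l, ((1/2 : ℝ) * (v i * v l)) *
        (∑ k, (Gd i l k * Xv k + G i k * D k l + G k l * D k i)) := by
  set f : Fin n → Fin n → Fin n → ℝ :=
    fun a b c => (1/2 : ℝ) * (v a * v b) * (Gd a b c * Xv c) with hf
  set F2 : Fin n → Fin n → Fin n → ℝ :=
    fun a b c => (1/2 : ℝ) * (v a * v b) * (G a c * D c b) with hF2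
  set F3 : Fin n → Fin n → Fin n → ℝ :=
    fun a b c => (1/2 : ℝ) * (v a * v b) * (G c b * D c a) with hF3
  set P : Fin n → Fin n → Fin n → ℝ :=
    fun a b c => G a b * v b * (v c * D a c) with hP
  have hA : (∑ i, ((1/2 : ℝ) * ∑ k, ∑ l, Gd k l i * v k * v l) * Xv i)
      = ∑ a, ∑ b, ∑ c, f b c a := by
    refine Finset.sum_congr rfl fun i _ => ?_
    simp only [Finset.mul_sum, Finset.sum_mul]
    exact Finset.sum_congr rfl fun k _ => Finset.sum_congr rfl fun l _ => by
      simp only [hf]; ring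
  have hB : (∑ i, (∑ k, G i k * v k) * (∑ l, v l * D i l))
      = ∑ a, ∑ b, ∑ c, P a b c := by
    refine Finset.sum_congr rfl fun i _ => ?_
    rw [Finset.sum_mul_sum]
  have hR : (∑ i, ∑ l, ((1/2 : ℝ) * (v i * v l)) *
        (∑ k, (Gd i l k * Xv k + G i k * D k l + G k l * D k i)))
      = ∑ a, ∑ b, ∑ c, (f a b c + F2 a b c + F3 a b c) := by
    refine Finset.sum_congr rfl fun a _ => Finset.sum_congr rfl fun b _ => ?_
    simp only [Finset.mul_sum]
    exact Finset.sum_congr rfl fun c _ => by simp only [hf, hF2, hF3]; ring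
  have h2 : ∑ a, ∑ b, ∑ c, F2 a b c = ∑ a, ∑ b, ∑ c, ((1/2 : ℝ) * P a b c) := by
    rw [← rot3 F2]
    refine Finset.sum_congr rfl fun a _ => Finset.sum_congr rfl fun b _ =>
      Finset.sum_congr rfl fun c _ => ?_
    simp only [hF2, hP]
    rw [hs b a]; ring
  have h3 : ∑ a, ∑ b, ∑ c, F3 a b c = ∑ a, ∑ b, ∑ c, ((1/2 : ℝ) * P a b c) := by
    rw [← swp13 F3]
    refine Finset.sum_congr rfl fun a _ => Finset.sum_congr rfl fun b _ =>
      Finset.sum_congr rfl fun c _ => ?_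
    simp only [hF3, hP]; ring
  rw [Finset.sum_add_distrib, hA, hB, hR]
  simp only [Finset.sum_add_distrib, h2, h3, rot3 f]
  simp only [← Finset.mul_sum]
  ring

/-- For the kinetic Lagrangian `L = ½ g_{kl}(q) v^k v^l` with symmetric metric `g`,
a vector field `X` satisfying the coordinate Killing equations yields, along any
solution of the Euler–Lagrange equations, the conserved Noether charge
`g_{ik}(q) q̇^k X^i(q)`. -/
theorem stmt_7
    (n : ℕ) (hn : 1 ≤ n)
    (g : (Fin n → ℝ) → Matrix (Fin n) (Fin n) ℝ)
    (hg : ∀ i j : Fin n, ContDiff ℝ 1 (fun x => g x i j))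
    (hsymm : ∀ (x : Fin n → ℝ) (i j : Fin n), g x i j = g x j i)
    (X : (Fin n → ℝ) → (Fin n → ℝ))
    (hX : ContDiff ℝ 1 X)
    (hKilling : ∀ (x : Fin n → ℝ) (i l : Fin n),
      ∑ k, (fderiv ℝ (fun y => g y i l) x (Pi.single k 1) * X x k
        + g x i k * fderiv ℝ (fun y => X y k) x (Pi.single l 1)
        + g x k l * fderiv ℝ (fun y => X y k) x (Pi.single i 1)) = 0)
    (q : ℝ → (Fin n → ℝ)) (hq : ContDiff ℝ 2 q)
    (hEL : ∀ (i : Fin n) (t : ℝ),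
      deriv (fun s => ∑ k, g (q s) i k * deriv q s k) t
        = (1/2) * ∑ k, ∑ l,
            fderiv ℝ (fun y => g y k l) (q t) (Pi.single i 1)
              * deriv q t k * deriv q t l) :
    ∀ t₁ t₂ : ℝ,
      (∑ i, ∑ k, g (q t₁) i k * deriv q t₁ k * X (q t₁) i)
        = ∑ i, ∑ k, g (q t₂) i k * deriv q t₂ k * X (q t₂) i := by
  have hq1 : ContDiff ℝ 1 q := hq.of_le (by norm_num)
  have hqd : Differentiable ℝ q := hq1.differentiable one_ne_zero
  have hq2 : ContDiff ℝ ((1 : ℕ∞)+1) q := hq.of_le (by norm_num)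
  have hq'c : ContDiff ℝ 1 (deriv q) := (contDiff_succ_iff_deriv.mp hq2).2.2
  have hq'd : Differentiable ℝ (deriv q) := hq'c.differentiable one_ne_zero
  have hq'dk : ∀ k, Differentiable ℝ (fun s => deriv q s k) :=
    fun k => differentiable_pi.mp hq'd k
  have hgd : ∀ i k, Differentiable ℝ (fun y => g y i k) :=
    fun i k => (hg i k).differentiable one_ne_zero
  have hXd : ∀ i, Differentiable ℝ (fun y => X y i) :=
    fun i => (contDiff_pi.mp hX i).differentiable one_ne_zero
  have hgqd : ∀ i k, Differentiable ℝ (fun s => g (q s) i k) :=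
    fun i k => (hgd i k).comp hqd
  have hpd : ∀ i, Differentiable ℝ (fun s => ∑ k, g (q s) i k * deriv q s k) :=
    fun i => Differentiable.fun_sum fun k _ => (hgqd i k).mul (hq'dk k)
  have hXqd : ∀ i, Differentiable ℝ (fun s => X (q s) i) :=
    fun i => (hXd i).comp hqd
  have hFd : Differentiable ℝ
      (fun s => ∑ i, (∑ k, g (q s) i k * deriv q s k) * X (q s) i) :=
    Differentiable.fun_sum fun i _ => (hpd i).mul (hXqd i)
  have hderiv0 : ∀ t, deriv
      (fun s => ∑ i, (∑ k, g (q s) i k * deriv q s k) * X (q s) i) t = 0 := by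
    intro t
    have hqt : HasDerivAt q (deriv q t) t := (hqd t).hasDerivAt
    have hXi : ∀ i, HasDerivAt (fun s => X (q s) i)
        (fderiv ℝ (fun y => X y i) (q t) (deriv q t)) t :=
      fun i => (hXd i (q t)).hasFDerivAt.comp_hasDerivAt t hqt
    have hpi : ∀ i, HasDerivAt (fun s => ∑ k, g (q s) i k * deriv q s k)
        (deriv (fun s => ∑ k, g (q s) i k * deriv q s k) t) t :=
      fun i => (hpd i t).hasDerivAt
    have hFt : HasDerivAt
        (fun s => ∑ i, (∑ k, g (q s) i k * deriv q s k) * X (q s) i)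
        (∑ i, (deriv (fun s => ∑ k, g (q s) i k * deriv q s k) t * X (q t) i
          + (∑ k, g (q t) i k * deriv q t k)
              * fderiv ℝ (fun y => X y i) (q t) (deriv q t))) t :=
      HasDerivAt.fun_sum fun i _ => (hpi i).mul (hXi i)
    rw [hFt.deriv]
    have hfx : ∀ i, fderiv ℝ (fun y => X y i) (q t) (deriv q t)
        = ∑ l, deriv q t l * fderiv ℝ (fun y => X y i) (q t) (Pi.single l 1) :=
      fun i => clm_pi_expand _ _
    simp only [hEL, hfx]
    rw [stmt7_alg (fun i k => g (q t) i k)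
      (fun k l i => fderiv ℝ (fun y => g y k l) (q t) (Pi.single i 1))
      (fun i l => fderiv ℝ (fun y => X y i) (q t) (Pi.single l 1))
      (deriv q t) (fun i => X (q t) i) (fun i k => hsymm (q t) i k)]
    simp [hKilling (q t)]
  have hconst := is_const_of_deriv_eq_zero hFd hderiv0
  intro t₁ t₂
  have := hconst t₁ t₂
  simpa [Finset.sum_mul] using this
end

section
/- (Clausius–Noether theorem, post-averaging Lagrangian form.) Let L : ℝ³ → ℝ be C¹ (arguments written (q, v, λ)) and set E(q, v, λ) = v·(∂L/∂v) − L. Let τ₁ < τ₂, let λ, Ē, ξ, Ψ : [τ₁, τ₂] → ℝ be C¹, let M : [τ₁, τ₂] → ℝ be continuous, and for each ε ∈ (0, 1] let q_ε : ℝ → ℝ be C¹ with E(q_ε(τ/ε), q̇_ε(τ/ε), λ(τ)) = Ē(τ) for all τ ∈ [τ₁, τ₂]. Assume: (i) (thermodynamic averaging) for every continuous G : [τ₁, τ₂] → ℝ and every subinterval [s₁, s₂] ⊆ [τ₁, τ₂], lim_{ε→0⁺} ∫_{s₁}^{s₂} G(τ)·[ (∂L/∂λ)(q_ε(τ/ε),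 q̇_ε(τ/ε), λ(τ)) − M(τ) ] dτ = 0; (ii) (quasisymmetry) for every subinterval [s₁, s₂] ⊆ [τ₁, τ₂], lim_{ε→0⁺} ∫_{s₁}^{s₂} [ ξ(τ)·Ē'(τ) + ξ(τ)·λ'(τ)·(∂L/∂λ)(q_ε(τ/ε), q̇_ε(τ/ε), λ(τ)) − (ξ·Ē)'(τ) ] dτ = Ψ(s₂) − Ψ(s₁). Then the Noether charge N := Ψ + ξ·Ē satisfies, for every τ ∈ [τ₁, τ₂], N'(τ) = ξ(τ)·( Ē'(τ) + M(τ)·λ'(τ) ); that is, ξ·(dE + ⟨∂_λL⟩ dλ) = dN is an exact differential. -/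
open Real Filter Set Topology intervalIntegral

/-- Clausius–Noether theorem (post-averaging Lagrangian form): under the
thermodynamic averaging hypothesis and the quasisymmetry hypothesis in the
quasistatic limit `ε → 0⁺`, the Noether charge `N = Ψ + ξ·Ē` satisfies
`dN = ξ·(dĒ + M dλ)`, i.e. heat over temperature is an exact differential. -/
theorem stmt_8
    (L : ℝ → ℝ → ℝ → ℝ)
    (hL : ContDiff ℝ 1 (fun x : ℝ × ℝ × ℝ => L x.1 x.2.1 x.2.2))
    (E : ℝ → ℝ → ℝ → ℝ)
    (hEdef : E = fun q v lam => v * deriv (fun w => L q w lam) v - L q v lam)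
    (τ₁ τ₂ : ℝ) (hτ : τ₁ < τ₂)
    (lam Ebar ξ Ψ : ℝ → ℝ) (M : ℝ → ℝ)
    (hlam : ContDiff ℝ 1 lam) (hEbar : ContDiff ℝ 1 Ebar)
    (hξ : ContDiff ℝ 1 ξ) (hΨ : ContDiff ℝ 1 Ψ)
    (hM : ContinuousOn M (Icc τ₁ τ₂))
    (qe : ℝ → ℝ → ℝ)
    (hqe : ∀ ε ∈ Ioc (0:ℝ) 1, ContDiff ℝ 1 (qe ε))
    (hcons : ∀ ε ∈ Ioc (0:ℝ) 1, ∀ τ ∈ Icc τ₁ τ₂,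
      E (qe ε (τ/ε)) (deriv (qe ε) (τ/ε)) (lam τ) = Ebar τ)
    (havg : ∀ G : ℝ → ℝ, ContinuousOn G (Icc τ₁ τ₂) →
      ∀ s₁ s₂ : ℝ, τ₁ ≤ s₁ → s₁ ≤ s₂ → s₂ ≤ τ₂ →
      Tendsto (fun ε : ℝ => ∫ τ in s₁..s₂,
          G τ * (deriv (fun l => L (qe ε (τ/ε)) (deriv (qe ε) (τ/ε)) l) (lam τ)
            - M τ))
        (𝓝[>] (0:ℝ)) (𝓝 0))
    (hqs : ∀ s₁ s₂ : ℝ, τ₁ ≤ s₁ → s₁ ≤ s₂ → s₂ ≤ τ₂ →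
      Tendsto (fun ε : ℝ => ∫ τ in s₁..s₂,
          (ξ τ * deriv Ebar τ
            + ξ τ * deriv lam τ *
                deriv (fun l => L (qe ε (τ/ε)) (deriv (qe ε) (τ/ε)) l) (lam τ)
            - deriv (fun σ => ξ σ * Ebar σ) τ))
        (𝓝[>] (0:ℝ)) (𝓝 (Ψ s₂ - Ψ s₁))) :
    ∀ τ ∈ Icc τ₁ τ₂,
      deriv (fun σ => Ψ σ + ξ σ * Ebar σ) τ
        = ξ τ * (deriv Ebar τ + M τ * deriv lam τ) := by
  -- notation
  set F : ℝ → ℝ := fun τ => ξ τ * deriv Ebar τ + ξ τ * deriv lam τ * M τ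
      - deriv (fun σ => ξ σ * Ebar σ) τ with hF
  have hξc : Continuous ξ := hξ.continuous
  have hlam' : Continuous (deriv lam) := hlam.continuous_deriv le_rfl
  have hEbar' : Continuous (deriv Ebar) := hEbar.continuous_deriv le_rfl
  have hξE' : Continuous (deriv (fun σ => ξ σ * Ebar σ)) :=
    (hξ.mul hEbar).continuous_deriv le_rfl
  have hΨ' : Continuous (deriv Ψ) := hΨ.continuous_deriv le_rfl
  have hFcont : ContinuousOn F (Icc τ₁ τ₂) := by
    apply ContinuousOn.sub
    · exact ((hξc.mul hEbar').continuousOn.add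
        (((hξc.mul hlam').continuousOn).mul hM))
    · exact hξE'.continuousOn
  -- the λ-derivative of L, and its continuity for fixed ε
  have hD3 : ∀ q v l : ℝ, deriv (fun l' => L q v l') l
      = fderiv ℝ (fun x : ℝ × ℝ × ℝ => L x.1 x.2.1 x.2.2) (q, v, l) ((0:ℝ), (0:ℝ), (1:ℝ)) := by
    intro q v l
    have hinner : HasDerivAt (fun l' : ℝ => ((q, v, l') : ℝ × ℝ × ℝ))
        ((0:ℝ), (0:ℝ), (1:ℝ)) l :=
      HasDerivAt.prodMk (hasDerivAt_const l q) (HasDerivAt.prodMk (hasDerivAt_const l v) (hasDerivAt_id l))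
    have houter := (hL.differentiable one_ne_zero (q, v, l)).hasFDerivAt
    have := houter.comp_hasDerivAt l hinner
    exact this.deriv
  have hDcont : ∀ ε ∈ Ioc (0:ℝ) 1, ContinuousOn
      (fun τ => deriv (fun l => L (qe ε (τ/ε)) (deriv (qe ε) (τ/ε)) l) (lam τ))
      (Icc τ₁ τ₂) := by
    intro ε hε
    have h1 : Continuous (fun x : ℝ × ℝ × ℝ =>
        fderiv ℝ (fun x : ℝ × ℝ × ℝ => L x.1 x.2.1 x.2.2) x ((0:ℝ), (0:ℝ), (1:ℝ))) :=
      (hL.continuous_fderiv one_ne_zero).clm_apply continuous_const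
    have h2 : Continuous (fun τ : ℝ =>
        ((qe ε (τ/ε), deriv (qe ε) (τ/ε), lam τ) : ℝ × ℝ × ℝ)) := by
      refine ((hqe ε hε).continuous.comp (continuous_id.div_const ε)).prodMk
        (Continuous.prodMk ?_ hlam.continuous)
      exact ((hqe ε hε).continuous_deriv le_rfl).comp (continuous_id.div_const ε)
    have := h1.comp h2
    refine Continuous.continuousOn ?_
    convert this using 2 with τ
    exact hD3 _ _ _
  -- key integral identity
  have key : ∀ s ∈ Icc τ₁ τ₂, (∫ τ in τ₁..s, F τ) = Ψ s - Ψ τ₁ := by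
    intro s hs
    have h1 := hqs τ₁ s le_rfl hs.1 hs.2
    have h2 := havg (fun τ => ξ τ * deriv lam τ) ((hξc.mul hlam').continuousOn)
      τ₁ s le_rfl hs.1 hs.2
    have hsub := h1.sub h2
    have hIcc : uIcc τ₁ s ⊆ Icc τ₁ τ₂ := by
      rw [uIcc_of_le hs.1]
      exact Icc_subset_Icc le_rfl hs.2
    have hev : ∀ᶠ ε in 𝓝[>] (0:ℝ),
        ((∫ τ in τ₁..s,
          (ξ τ * deriv Ebar τ
            + ξ τ * deriv lam τ *
                deriv (fun l => L (qe ε (τ/ε)) (deriv (qe ε) (τ/ε)) l) (lam τ)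
            - deriv (fun σ => ξ σ * Ebar σ) τ))
          - ∫ τ in τ₁..s,
          (ξ τ * deriv lam τ) * (deriv (fun l => L (qe ε (τ/ε)) (deriv (qe ε) (τ/ε)) l) (lam τ)
            - M τ))
        = ∫ τ in τ₁..s, F τ := by
      filter_upwards [Ioc_mem_nhdsGT_of_mem (Set.mem_Ico.mpr ⟨le_rfl, zero_lt_one⟩)] with ε hε
      have hDc := hDcont ε hε
      have hint1 : IntervalIntegrable (fun τ =>
          ξ τ * deriv Ebar τ
            + ξ τ * deriv lam τ *
                deriv (fun l => L (qe ε (τ/ε)) (deriv (qe ε) (τ/ε)) l) (lam τ)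
            - deriv (fun σ => ξ σ * Ebar σ) τ) MeasureTheory.volume τ₁ s := by
        apply ContinuousOn.intervalIntegrable
        apply ContinuousOn.sub
        · exact ((hξc.mul hEbar').continuousOn.mono hIcc).add
            (((hξc.mul hlam').continuousOn.mono hIcc).mul (hDc.mono hIcc))
        · exact hξE'.continuousOn
      have hint2 : IntervalIntegrable (fun τ =>
          (ξ τ * deriv lam τ) * (deriv (fun l => L (qe ε (τ/ε)) (deriv (qe ε) (τ/ε)) l) (lam τ)
            - M τ)) MeasureTheory.volume τ₁ s := by
        apply ContinuousOn.intervalIntegrable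
        exact ((hξc.mul hlam').continuousOn.mono hIcc).mul
          ((hDc.mono hIcc).sub (hM.mono hIcc))
      rw [← intervalIntegral.integral_sub hint1 hint2]
      apply intervalIntegral.integral_congr
      intro τ _
      simp only [hF]
      ring
    have := tendsto_nhds_unique (Tendsto.congr' hev hsub)
      (tendsto_const_nhds : Tendsto (fun _ : ℝ => ∫ τ in τ₁..s, F τ) (𝓝[>] (0:ℝ))
        (𝓝 (∫ τ in τ₁..s, F τ)))
    rw [sub_zero] at this
    exact this.symm
  -- F = deriv Ψ on the interior
  have hinner : ∀ τ ∈ Ioo τ₁ τ₂, F τ = deriv Ψ τ := by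
    intro τ hτm
    have hmem : Icc τ₁ τ₂ ∈ 𝓝 τ := Icc_mem_nhds hτm.1 hτm.2
    have hintF : IntervalIntegrable F MeasureTheory.volume τ₁ τ := by
      apply ContinuousOn.intervalIntegrable
      apply hFcont.mono
      rw [uIcc_of_le (le_of_lt hτm.1)]
      exact Icc_subset_Icc le_rfl (le_of_lt hτm.2)
    have hmeas : StronglyMeasurableAtFilter F (𝓝 τ) MeasureTheory.volume := by
      refine ⟨Icc τ₁ τ₂, hmem, ?_⟩
      exact hFcont.aestronglyMeasurable measurableSet_Icc
    have hca : ContinuousAt F τ := hFcont.continuousAt hmem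
    have hd1 : HasDerivAt (fun u => ∫ t in τ₁..u, F t) (F τ) τ :=
      intervalIntegral.integral_hasDerivAt_right hintF hmeas hca
    have heq : (fun u => ∫ t in τ₁..u, F t) =ᶠ[𝓝 τ] fun u => Ψ u - Ψ τ₁ := by
      filter_upwards [hmem] with u hu
      exact key u hu
    have hd2 : HasDerivAt (fun u => Ψ u - Ψ τ₁) (F τ) τ := hd1.congr_of_eventuallyEq heq.symm
    have hd3 : HasDerivAt Ψ (deriv Ψ τ) τ := (hΨ.differentiable one_ne_zero τ).hasDerivAt
    have hd4 : HasDerivAt (fun u => Ψ u - Ψ τ₁) (deriv Ψ τ) τ := hd3.sub_const _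
    exact hd2.unique hd4
  -- extend to the closed interval by continuity
  have hclosed : ∀ τ ∈ Icc τ₁ τ₂, F τ = deriv Ψ τ := by
    intro τ hτm
    have hcl : τ ∈ closure (Ioo τ₁ τ₂) := by
      rw [closure_Ioo (ne_of_lt hτ)]; exact hτm
    have hne : (𝓝[Ioo τ₁ τ₂] τ).NeBot := mem_closure_iff_nhdsWithin_neBot.mp hcl
    have t1 : Tendsto F (𝓝[Ioo τ₁ τ₂] τ) (𝓝 (F τ)) :=
      (hFcont τ hτm).mono_left (nhdsWithin_mono τ Ioo_subset_Icc_self)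
    have t2 : Tendsto (deriv Ψ) (𝓝[Ioo τ₁ τ₂] τ) (𝓝 (deriv Ψ τ)) :=
      (hΨ'.tendsto τ).mono_left nhdsWithin_le_nhds
    have hev : F =ᶠ[𝓝[Ioo τ₁ τ₂] τ] deriv Ψ := by
      filter_upwards [self_mem_nhdsWithin] with u hu
      exact hinner u hu
    exact tendsto_nhds_unique (t1.congr' hev) t2
  -- conclude
  intro τ hτm
  have hdadd : deriv (fun σ => Ψ σ + ξ σ * Ebar σ) τ
      = deriv Ψ τ + deriv (fun σ => ξ σ * Ebar σ) τ := by
    apply deriv_fun_add (hΨ.differentiable one_ne_zero τ)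
      (((hξ.mul hEbar).differentiable one_ne_zero) τ)
  rw [hdadd, ← hclosed τ hτm]
  simp only [hF]
  ring
end

section
/- Let H : ℝ³ → ℝ be C¹ and F : ℝ³ → ℝ be C² (arguments written (q, p, t)), and suppose F satisfies the conservation-law identity ∂F/∂t + (∂F/∂q)·(∂H/∂p) − (∂F/∂p)·(∂H/∂q) = 0 at every point (q, p, t) (i.e. ∂F/∂t + {F, H} = 0). Then along every C¹ path (q(t), p(t)): (∂F/∂q)·(q̇(t) − ∂H/∂p) + (∂F/∂p)·(ṗ(t) + ∂H/∂q) + d/dt[ −p(t)·(∂F/∂p)(q(t), p(t), t) ] = d/dt[ F(q(t), p(t), t) − p(t)·(∂F/∂p)(q(t), p(t), t) ], with all partial derivatives evaluated at (q(t), p(t), t). Hence the phase-space shift δq = −∂F/∂p, δp = ∂F/∂q (with ξ = 0) is a quasisymmetry of the Hamiltonian action with boundary function Ψ = F − p·∂F/∂p, and its Noether charge N = Ψ − p·δq = Ψ + p·∂F/∂p equals F itself. -/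
/-- A conserved quantity `F` (with `∂F/∂t + {F, H} = 0`) generates its own
symmetry: the phase-space shift `δq = −∂F/∂p`, `δp = ∂F/∂q` (with `ξ = 0`) is a
quasisymmetry of the Hamiltonian action with boundary function
`Ψ = F − p·∂F/∂p`, and its Noether charge `N = Ψ + p·∂F/∂p` equals `F`. -/
theorem stmt_10
    (H F : ℝ → ℝ → ℝ → ℝ)
    (hH : ContDiff ℝ 1 (fun x : ℝ × ℝ × ℝ => H x.1 x.2.1 x.2.2))
    (hF : ContDiff ℝ 2 (fun x : ℝ × ℝ × ℝ => F x.1 x.2.1 x.2.2))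
    (hcons : ∀ a b c : ℝ,
      deriv (fun s => F a b s) c
        + deriv (fun x => F x b c) a * deriv (fun y => H a y c) b
        - deriv (fun y => F a y c) b * deriv (fun x => H x b c) a = 0) :
    ∀ q p : ℝ → ℝ, ContDiff ℝ 1 q → ContDiff ℝ 1 p → ∀ t : ℝ,
      (deriv (fun x => F x (p t) t) (q t)
          * (deriv q t - deriv (fun y => H (q t) y t) (p t))
        + deriv (fun y => F (q t) y t) (p t)
          * (deriv p t + deriv (fun x => H x (p t) t) (q t))
        + deriv (fun s => - p s * deriv (fun y => F (q s) y s) (p s)) t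
      = deriv (fun s => F (q s) (p s) s
          - p s * deriv (fun y => F (q s) y s) (p s)) t)
      ∧ ((F (q t) (p t) t - p t * deriv (fun y => F (q t) y t) (p t))
          + p t * deriv (fun y => F (q t) y t) (p t)
        = F (q t) (p t) t) := by
  intro q p hq hp t
  refine ⟨?_, by ring⟩
  set Fc : ℝ × ℝ × ℝ → ℝ := fun x => F x.1 x.2.1 x.2.2 with hFcdef
  have hFd : Differentiable ℝ Fc := hF.differentiable (by norm_num)
  have slice1 : ∀ a b c : ℝ, HasDerivAt (fun x => F x b c)
      (fderiv ℝ Fc (a, b, c) (1, 0, 0)) a := by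
    intro a b c
    have h1 : HasDerivAt (fun x : ℝ => ((x, b, c) : ℝ × ℝ × ℝ)) ((1:ℝ), (0:ℝ), (0:ℝ)) a :=
      (hasDerivAt_id a).prodMk ((hasDerivAt_const a b).prodMk (hasDerivAt_const a c))
    exact (hFd (a, b, c)).hasFDerivAt.comp_hasDerivAt a h1
  have slice2 : ∀ a b c : ℝ, HasDerivAt (fun y => F a y c)
      (fderiv ℝ Fc (a, b, c) (0, 1, 0)) b := by
    intro a b c
    have h1 : HasDerivAt (fun y : ℝ => ((a, y, c) : ℝ × ℝ × ℝ)) ((0:ℝ), (1:ℝ), (0:ℝ)) b :=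
      (hasDerivAt_const b a).prodMk ((hasDerivAt_id b).prodMk (hasDerivAt_const b c))
    exact (hFd (a, b, c)).hasFDerivAt.comp_hasDerivAt b h1
  have slice3 : ∀ a b c : ℝ, HasDerivAt (fun s => F a b s)
      (fderiv ℝ Fc (a, b, c) (0, 0, 1)) c := by
    intro a b c
    have h1 : HasDerivAt (fun s : ℝ => ((a, b, s) : ℝ × ℝ × ℝ)) ((0:ℝ), (0:ℝ), (1:ℝ)) c :=
      (hasDerivAt_const c a).prodMk ((hasDerivAt_const c b).prodMk (hasDerivAt_id c))
    exact (hFd (a, b, c)).hasFDerivAt.comp_hasDerivAt c h1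
  set G : ℝ × ℝ × ℝ → ℝ := fun x => fderiv ℝ Fc x (0, 1, 0) with hGdef
  have hG : ContDiff ℝ 1 G :=
    (hF.fderiv_right (by norm_num)).clm_apply contDiff_const
  have hG2 : ∀ a b c : ℝ, deriv (fun y => F a y c) b = G (a, b, c) := by
    intro a b c
    exact (slice2 a b c).deriv
  have hq' : HasDerivAt q (deriv q t) t := (hq.differentiable one_ne_zero t).hasDerivAt
  have hp' : HasDerivAt p (deriv p t) t := (hp.differentiable one_ne_zero t).hasDerivAt
  have hpath : HasDerivAt (fun s => ((q s, p s, s) : ℝ × ℝ × ℝ))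
      (deriv q t, deriv p t, 1) t :=
    hq'.prodMk (hp'.prodMk (hasDerivAt_id t))
  have hA : HasDerivAt (fun s => F (q s) (p s) s)
      (fderiv ℝ Fc (q t, p t, t) (deriv q t, deriv p t, 1)) t :=
    by have := (hFd (q t, p t, t)).hasFDerivAt.comp_hasDerivAt t hpath; exact this
  have hgd : DifferentiableAt ℝ (fun s => p s * G (q s, p s, s)) t :=
    (hp.differentiable one_ne_zero t).mul
      (by
        have := DifferentiableAt.comp (g := G) (f := fun s => ((q s, p s, s) : ℝ × ℝ × ℝ)) t
          (hG.differentiable one_ne_zero (q t, p t, t)) hpath.differentiableAt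
        exact this)
  have hlin : fderiv ℝ Fc (q t, p t, t) (deriv q t, deriv p t, 1)
      = deriv q t * fderiv ℝ Fc (q t, p t, t) (1, 0, 0)
        + deriv p t * fderiv ℝ Fc (q t, p t, t) (0, 1, 0)
        + fderiv ℝ Fc (q t, p t, t) (0, 0, 1) := by
    have hv : ((deriv q t, deriv p t, 1) : ℝ × ℝ × ℝ)
        = deriv q t • ((1:ℝ), (0:ℝ), (0:ℝ)) + deriv p t • ((0:ℝ), (1:ℝ), (0:ℝ))
          + ((0:ℝ), (0:ℝ), (1:ℝ)) := by
      simp [Prod.ext_iff]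
    rw [hv, map_add, map_add, map_smul, map_smul, smul_eq_mul, smul_eq_mul]
  have hc := hcons (q t) (p t) t
  rw [(slice1 (q t) (p t) t).deriv, (slice2 (q t) (p t) t).deriv,
    (slice3 (q t) (p t) t).deriv] at hc
  simp only [hG2, neg_mul]
  rw [deriv_fun_sub hA.differentiableAt hgd, deriv.fun_neg, hA.deriv, hlin]
  have hGX : G (q t, p t, t) = fderiv ℝ Fc (q t, p t, t) (0, 1, 0) := rfl
  rw [hGX, (slice1 (q t) (p t) t).deriv]
  linear_combination -hc
end

section
/- Let L : ℝ³ → ℝ be C² (arguments written (q, v, λ)), let q : ℝ → ℝ be C², λ : ℝ → ℝ be C¹, let ξ, M : ℝ → ℝ be continuous, and let N : ℝ → ℝ be C¹ satisfying the averaged Killing relation N'(t) = ξ(t)·( dE/dt(t) + M(t)·λ̇(t) ) for all t, where E(t) = (∂L/∂v)(q(t), q̇(t), λ(t))·q̇(t) − L(q(t), q̇(t), λ(t)). Then for all t₁ < t₂: N(t₂) − N(t₁) = ∫_{t₁}^{t₂} [ −ξ(t)·ℰ(t)·q̇(t) + ξ(t)·λ̇(t)·( M(t) − (∂L/∂λ)(q(t),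 q̇(t), λ(t)) ) ] dt, where ℰ(t) = (∂L/∂q)(q(t), q̇(t), λ(t)) − d/dt[(∂L/∂v)(q(t), q̇(t), λ(t))]. (The two sources of Noether-charge/entropy production are deviation from the quasistatic average, λ̇·(⟨∂_λL⟩ − ∂_λL), and deviation from the equations of motion, ℰ·q̇.) -/
private lemma pd1 {F : ℝ × ℝ × ℝ → ℝ} {a b c : ℝ}
    (hF : DifferentiableAt ℝ F (a, b, c)) :
    deriv (fun x => F (x, b, c)) a = fderiv ℝ F (a, b, c) (1, 0, 0) := by
  have h1 : HasDerivAt (fun x : ℝ => (x, b, c)) ((1:ℝ), (0:ℝ), (0:ℝ)) a :=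
    (hasDerivAt_id a).prodMk ((hasDerivAt_const a b).prodMk (hasDerivAt_const a c))
  exact (hF.hasFDerivAt.comp_hasDerivAt a h1).deriv

private lemma pd2 {F : ℝ × ℝ × ℝ → ℝ} {a b c : ℝ}
    (hF : DifferentiableAt ℝ F (a, b, c)) :
    deriv (fun v => F (a, v, c)) b = fderiv ℝ F (a, b, c) (0, 1, 0) := by
  have h1 : HasDerivAt (fun v : ℝ => (a, v, c)) ((0:ℝ), (1:ℝ), (0:ℝ)) b :=
    (hasDerivAt_const b a).prodMk ((hasDerivAt_id b).prodMk (hasDerivAt_const b c))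
  exact (hF.hasFDerivAt.comp_hasDerivAt b h1).deriv

private lemma pd3 {F : ℝ × ℝ × ℝ → ℝ} {a b c : ℝ}
    (hF : DifferentiableAt ℝ F (a, b, c)) :
    deriv (fun l => F (a, b, l)) c = fderiv ℝ F (a, b, c) (0, 0, 1) := by
  have h1 : HasDerivAt (fun l : ℝ => (a, b, l)) ((0:ℝ), (0:ℝ), (1:ℝ)) c :=
    (hasDerivAt_const c a).prodMk ((hasDerivAt_const c b).prodMk (hasDerivAt_id c))
  exact (hF.hasFDerivAt.comp_hasDerivAt c h1).deriv

/-- The two sources of Noether-charge (entropy) production: if the averaged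
Killing relation `N' = ξ·(dE/dt + M·λ̇)` holds, then the change of `N` is the
integral of `−ξ·ℰ·q̇ + ξ·λ̇·(M − ∂L/∂λ)`. -/
theorem stmt_11
    (L : ℝ → ℝ → ℝ → ℝ)
    (hL : ContDiff ℝ 2 (fun x : ℝ × ℝ × ℝ => L x.1 x.2.1 x.2.2))
    (q : ℝ → ℝ) (hq : ContDiff ℝ 2 q)
    (lam : ℝ → ℝ) (hlam : ContDiff ℝ 1 lam)
    (ξ M : ℝ → ℝ) (hξ : Continuous ξ) (hM : Continuous M)
    (N : ℝ → ℝ) (hN : ContDiff ℝ 1 N)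
    (E : ℝ → ℝ)
    (hE : E = fun t =>
      deriv (fun v => L (q t) v (lam t)) (deriv q t) * deriv q t
        - L (q t) (deriv q t) (lam t))
    (EulerL : ℝ → ℝ)
    (hEulerL : EulerL = fun t =>
      deriv (fun x => L x (deriv q t) (lam t)) (q t)
        - deriv (fun s => deriv (fun v => L (q s) v (lam s)) (deriv q s)) t)
    (hKilling : ∀ t : ℝ, deriv N t = ξ t * (deriv E t + M t * deriv lam t)) :
    ∀ t₁ t₂ : ℝ, t₁ < t₂ →
      N t₂ - N t₁ = ∫ t in t₁..t₂,
        (- ξ t * EulerL t * deriv q t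
          + ξ t * deriv lam t
            * (M t - deriv (fun l => L (q t) (deriv q t) l) (lam t))) := by
  intro t₁ t₂ _
  set F : ℝ × ℝ × ℝ → ℝ := fun x : ℝ × ℝ × ℝ => L x.1 x.2.1 x.2.2 with hFdef
  have h12 : (1 : WithTop ℕ∞) ≤ 2 := by norm_num
  have hFd : Differentiable ℝ F := hL.differentiable (by norm_num)
  -- q is C², so deriv q is C¹
  have hq2 : ContDiff ℝ (((1 : ℕ∞) : WithTop ℕ∞) + 1) q := by
    rwa [show (((1 : ℕ∞) : WithTop ℕ∞) + 1) = 2 from by norm_cast]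
  have hdq : ContDiff ℝ 1 (deriv q) := by
    have := (contDiff_succ_iff_deriv.mp hq2).2
    exact_mod_cast this.2
  have hqdiff : Differentiable ℝ q := hq.differentiable (by norm_num)
  have hdqdiff : Differentiable ℝ (deriv q) := hdq.differentiable (by norm_num)
  have hlamdiff : Differentiable ℝ lam := hlam.differentiable (by norm_num)
  -- the curve
  set c : ℝ → ℝ × ℝ × ℝ := fun t => (q t, deriv q t, lam t) with hcdef
  have hc : ContDiff ℝ 1 c :=
    (hq.of_le h12).prodMk (hdq.prodMk hlam)
  have hct : ∀ t, HasDerivAt c (deriv q t, deriv (deriv q) t, deriv lam t) t := fun t =>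
    ((hqdiff t).hasDerivAt).prodMk (((hdqdiff t).hasDerivAt).prodMk ((hlamdiff t).hasDerivAt))
  -- the momentum
  set p : ℝ → ℝ := fun t => fderiv ℝ F (c t) (0, 1, 0) with hpdef
  have hp1 : ContDiff ℝ 1 p := by
    have h1 : ContDiff ℝ 1 (fun x : ℝ × ℝ × ℝ => fderiv ℝ F x (0, 1, 0)) :=
      (hL.fderiv_right (by norm_num : (1 : WithTop ℕ∞) + 1 ≤ 2)).clm_apply contDiff_const
    exact h1.comp hc
  have hpdiff : Differentiable ℝ p := hp1.differentiable (by norm_num)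
  have hp_eq : ∀ s, deriv (fun v => L (q s) v (lam s)) (deriv q s) = p s := fun s =>
    pd2 (hFd (c s))
  -- rewrite E
  have hE' : E = fun t => p t * deriv q t - F (c t) := by
    rw [hE]; funext t; rw [hp_eq t]
  -- deriv E
  have hderivE : ∀ t, deriv E t
      = deriv p t * deriv q t + p t * deriv (deriv q) t
        - fderiv ℝ F (c t) (deriv q t, deriv (deriv q) t, deriv lam t) := by
    intro t
    have h1 : HasDerivAt E (deriv p t * deriv q t + p t * deriv (deriv q) t
        - fderiv ℝ F (c t) (deriv q t, deriv (deriv q) t, deriv lam t)) t := by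
      rw [hE']
      exact (((hpdiff t).hasDerivAt.mul (hdqdiff t).hasDerivAt)).sub
        ((hFd (c t)).hasFDerivAt.comp_hasDerivAt t (hct t))
    exact h1.deriv
  -- expand fderiv on the velocity vector
  have hlin : ∀ t, fderiv ℝ F (c t) (deriv q t, deriv (deriv q) t, deriv lam t)
      = deriv q t * fderiv ℝ F (c t) (1, 0, 0) + deriv (deriv q) t * p t
        + deriv lam t * fderiv ℝ F (c t) (0, 0, 1) := by
    intro t
    have hv : ((deriv q t, deriv (deriv q) t, deriv lam t) : ℝ × ℝ × ℝ)
        = deriv q t • ((1:ℝ), (0:ℝ), (0:ℝ)) + deriv (deriv q) t • ((0:ℝ), (1:ℝ), (0:ℝ))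
          + deriv lam t • ((0:ℝ), (0:ℝ), (1:ℝ)) := by
      simp [Prod.ext_iff]
    rw [hv, map_add, map_add, map_smul, map_smul, map_smul]
    simp [hpdef, smul_eq_mul]
  -- rewrite EulerL
  have hEulerL' : ∀ t, EulerL t = fderiv ℝ F (c t) (1, 0, 0) - deriv p t := by
    intro t
    rw [hEulerL]
    have h1 : (fun s => deriv (fun v => L (q s) v (lam s)) (deriv q s)) = p :=
      funext hp_eq
    rw [h1]
    exact congrArg (fun z => z - deriv p t) (pd1 (hFd (c t)))
  -- pointwise identity: integrand = deriv N
  have hkey : ∀ t, - ξ t * EulerL t * deriv q t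
      + ξ t * deriv lam t * (M t - deriv (fun l => L (q t) (deriv q t) l) (lam t))
      = deriv N t := by
    intro t
    rw [hKilling t, hderivE t, hlin t, hEulerL' t, pd3 (hFd (c t))]
    ring
  -- continuity of deriv N
  have hN1 : ContDiff ℝ (((0 : ℕ∞) : WithTop ℕ∞) + 1) N := by
    rwa [show (((0 : ℕ∞) : WithTop ℕ∞) + 1) = 1 from by norm_cast]
  have hcontN : Continuous (deriv N) := by
    have := (contDiff_succ_iff_deriv.mp hN1).2.2
    exact contDiff_zero.mp (by exact_mod_cast this)
  calc N t₂ - N t₁ = ∫ t in t₁..t₂, deriv N t :=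
        (intervalIntegral.integral_deriv_eq_sub
          (fun x _ => hN.differentiable (by norm_num) x)
          (hcontN.intervalIntegrable t₁ t₂)).symm
    _ = _ := intervalIntegral.integral_congr (fun t _ => (hkey t).symm)
end

section
/- Let m, g > 0, L ≥ 0, and E < 0 with m³g² > 2|E|L². Define r₋ = ( mg − √( (mg)² − 2|E|L²/m ) )/(2|E|), r₊ = ( mg + √( (mg)² − 2|E|L²/m ) )/(2|E|), and the Kepler period T = 2π·m^{3/2}·g/(2|E|)^{3/2}. Then (2/T)·∫_{r₋}^{r₊} √(2m|E|)·√( (r − r₋)(r₊ − r) )/r dr = 2|E| − 2√2·|E|^{3/2}·L/( m^{3/2}·g ). (This is the natural temperature k_B T(E, g) = ⟨p_r ṙ⟩ of the Kepler problem; for L = 0 it reduces to |E| = k_B T/2, the equipartition theorem for one-dimensional motion.) -/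
open Real

set_option maxHeartbeats 1600000

lemma kepler_integral (a b : ℝ) (ha : 0 ≤ a) (hab : a < b) :
    ∫ r in a..b, Real.sqrt ((r - a) * (b - r)) / r
      = Real.pi * ((a + b) / 2 - Real.sqrt (a * b)) := by
  have hb : 0 < b := lt_of_le_of_lt ha hab
  have hd : 0 < b - a := sub_pos.mpr hab
  set F : ℝ → ℝ := fun x =>
    Real.sqrt ((x - a) * (b - x))
      + (a + b) / 2 * Real.arcsin ((2 * x - (a + b)) / (b - a))
      - Real.sqrt (a * b) * Real.arcsin (((a + b) * x - 2 * (a * b)) / ((b - a) * x))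
    with hF
  -- derivative on Ioo
  have hderiv : ∀ x ∈ Set.Ioo a b,
      HasDerivAt F (Real.sqrt ((x - a) * (b - x)) / x) x := by
    intro x hx
    obtain ⟨hxa, hxb⟩ := hx
    have hx0 : 0 < x := lt_of_le_of_lt ha hxa
    have hQ : 0 < (x - a) * (b - x) := mul_pos (sub_pos.mpr hxa) (sub_pos.mpr hxb)
    set s := Real.sqrt ((x - a) * (b - x)) with hsdef
    have hs2 : s ^ 2 = (x - a) * (b - x) := Real.sq_sqrt hQ.le
    have hspos : 0 < s := Real.sqrt_pos.mpr hQ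
    -- term 1
    have h1 : HasDerivAt (fun y => Real.sqrt ((y - a) * (b - y)))
        ((a + b - 2 * x) / (2 * s)) x := by
      have hin : HasDerivAt (fun y => (y - a) * (b - y)) (a + b - 2 * x) x := by
        have := (((hasDerivAt_id x).sub_const a).mul ((hasDerivAt_const x b).sub (hasDerivAt_id x)))
        refine this.congr_deriv (Eq.symm ?_)
        try simp only [id_eq, Pi.sub_apply]
        ring
      exact hin.sqrt (ne_of_gt hQ)
    -- term 2
    have hu1 : HasDerivAt (fun y => (2 * y - (a + b)) / (b - a)) (2 / (b - a)) x := by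
      have := (((hasDerivAt_id x).const_mul 2).sub_const (a + b)).div_const (b - a)
      refine this.congr_deriv (Eq.symm ?_)
      try simp only [id_eq]
      ring
    have hu1sq : Real.sqrt (1 - ((2 * x - (a + b)) / (b - a)) ^ 2) = 2 * s / (b - a) := by
      have h : 1 - ((2 * x - (a + b)) / (b - a)) ^ 2 = (2 * s / (b - a)) ^ 2 := by
        field_simp
        nlinarith [hs2]
      rw [h, Real.sqrt_sq (by positivity)]
    have hu1ne : ((2 * x - (a + b)) / (b - a)) ≠ -1 ∧ ((2 * x - (a + b)) / (b - a)) ≠ 1 := by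
      constructor <;> intro h <;>
      · have h' := hu1sq
        rw [h] at h'
        norm_num at h'
        have hpos : 0 < 2 * s / (b - a) := div_pos (by linarith) hd
        linarith
    have h2 : HasDerivAt (fun y => (a + b) / 2 * Real.arcsin ((2 * y - (a + b)) / (b - a)))
        ((a + b) / 2 * (1 / (2 * s / (b - a)) * (2 / (b - a)))) x := by
      have := ((Real.hasDerivAt_arcsin hu1ne.1 hu1ne.2).comp x hu1).const_mul ((a + b) / 2)
      rw [hu1sq] at this
      exact this
    -- term 3
    have h3 : HasDerivAt (fun y =>
        Real.sqrt (a * b) * Real.arcsin (((a + b) * y - 2 * (a * b)) / ((b - a) * y)))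
        (a * b / (x * s)) x := by
      rcases eq_or_lt_of_le ha with ha0 | hapos
      · -- a = 0: function is constant 0
        have hfun : (fun y : ℝ =>
            Real.sqrt (a * b) * Real.arcsin (((a + b) * y - 2 * (a * b)) / ((b - a) * y)))
            = fun _ => (0 : ℝ) := by
          funext y
          rw [← ha0]
          simp
        rw [hfun, ← ha0]
        simpa using hasDerivAt_const x (0 : ℝ)
      · -- a > 0
        have hab0 : 0 < a * b := mul_pos hapos hb
        set t := Real.sqrt (a * b) with htdef
        have hsab : 0 < t := Real.sqrt_pos.mpr hab0
        have ht2 : t ^ 2 = a * b := Real.sq_sqrt hab0.le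
        have hden : (b - a) * x ≠ 0 := by positivity
        have hu2 : HasDerivAt (fun y => ((a + b) * y - 2 * (a * b)) / ((b - a) * y))
            (2 * (a * b) / ((b - a) * x ^ 2)) x := by
          have hnum : HasDerivAt (fun y => (a + b) * y - 2 * (a * b)) (a + b) x := by
            have := ((hasDerivAt_id x).const_mul (a + b)).sub_const (2 * (a * b))
            refine this.congr_deriv (Eq.symm ?_)
            try simp only [id_eq]
            ring
          have hde : HasDerivAt (fun y => (b - a) * y) (b - a) x := by
            have := (hasDerivAt_id x).const_mul (b - a)
            refine this.congr_deriv (Eq.symm ?_)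
            try simp only [id_eq]
            ring
          have := hnum.div hde hden
          refine this.congr_deriv (Eq.symm ?_)
          field_simp
          ring
        have hts : (t * s) ^ 2 = (a * b) * ((x - a) * (b - x)) := by
          rw [mul_pow, ht2, hs2]
        have hu2sq : Real.sqrt (1 - (((a + b) * x - 2 * (a * b)) / ((b - a) * x)) ^ 2)
            = 2 * t * s / ((b - a) * x) := by
          have h : 1 - (((a + b) * x - 2 * (a * b)) / ((b - a) * x)) ^ 2
              = (2 * t * s / ((b - a) * x)) ^ 2 := by
            field_simp
            nlinarith [hts]
          rw [h, Real.sqrt_sq (by positivity)]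
        have hu2ne : (((a + b) * x - 2 * (a * b)) / ((b - a) * x)) ≠ -1 ∧
            (((a + b) * x - 2 * (a * b)) / ((b - a) * x)) ≠ 1 := by
          constructor <;> intro h <;>
          · have h' := hu2sq
            rw [h] at h'
            norm_num at h'
            have hpos : 0 < 2 * t * s / ((b - a) * x) :=
              div_pos (by nlinarith) (mul_pos hd hx0)
            linarith
        have := ((Real.hasDerivAt_arcsin hu2ne.1 hu2ne.2).comp x hu2).const_mul t
        rw [hu2sq] at this
        refine this.congr_deriv (Eq.symm ?_)
        field_simp
    -- combine
    have hcomb := (h1.add h2).sub h3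
    refine hcomb.congr_deriv (Eq.symm ?_)
    rw [eq_sub_iff_add_eq]
    field_simp
    linear_combination 2 * hs2
  -- continuity on Icc
  have hcont : ContinuousOn F (Set.Icc a b) := by
    apply ContinuousOn.sub
    · apply ContinuousOn.add
      · exact (Real.continuous_sqrt.comp (by fun_prop)).continuousOn
      · apply Continuous.continuousOn
        exact continuous_const.mul (Real.continuous_arcsin.comp
          ((((continuous_const.mul continuous_id).sub continuous_const).div_const _)))
    · rcases eq_or_lt_of_le ha with ha0 | hapos
      · have hfun : (fun x : ℝ => Real.sqrt (a * b) *
            Real.arcsin (((a + b) * x - 2 * (a * b)) / ((b - a) * x))) = fun _ => (0 : ℝ) := by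
          funext y
          rw [← ha0]
          simp
        rw [hfun]
        exact continuousOn_const
      · apply ContinuousOn.mul continuousOn_const
        apply Real.continuous_arcsin.comp_continuousOn
        apply ContinuousOn.div (by fun_prop) (by fun_prop)
        intro x hx
        have hx0 : 0 < x := lt_of_lt_of_le hapos hx.1
        positivity
  -- integrability
  have hint : IntervalIntegrable (fun r => Real.sqrt ((r - a) * (b - r)) / r)
      MeasureTheory.volume a b := by
    rcases eq_or_lt_of_le ha with ha0 | hapos
    · obtain rfl : a = 0 := ha0.symm
      have hg : IntervalIntegrable (fun x : ℝ => Real.sqrt b * x ^ (-(1/2) : ℝ))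
          MeasureTheory.volume 0 b :=
        (intervalIntegral.intervalIntegrable_rpow' (by norm_num)).const_mul _
      apply hg.mono_fun
      · apply Measurable.aestronglyMeasurable
        exact (Real.continuous_sqrt.measurable.comp
          (((measurable_id.sub_const 0).mul (measurable_const.sub measurable_id)))).div
          measurable_id
      · apply Filter.eventually_of_mem (MeasureTheory.self_mem_ae_restrict measurableSet_uIoc)
        intro x hx
        rw [Set.uIoc_of_le hb.le] at hx
        obtain ⟨hx0, hxb⟩ := hx
        have hsx : 0 < Real.sqrt x := Real.sqrt_pos.mpr hx0
        have hrw : x ^ (-(1/2) : ℝ) = 1 / Real.sqrt x := by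
          rw [Real.rpow_neg hx0.le, ← Real.sqrt_eq_rpow, one_div]
        simp only [Real.norm_eq_abs]
        rw [abs_of_nonneg (by positivity),
          abs_of_nonneg (mul_nonneg (Real.sqrt_nonneg b) (Real.rpow_nonneg hx0.le _)), hrw]
        have h1 : Real.sqrt ((x - 0) * (b - x)) ≤ Real.sqrt (x * b) :=
          Real.sqrt_le_sqrt (by nlinarith)
        have h2 : Real.sqrt (x * b) / x = Real.sqrt b * (1 / Real.sqrt x) := by
          rw [Real.sqrt_mul hx0.le, div_eq_iff hx0.ne']
          have hxx : Real.sqrt x * Real.sqrt x = x := Real.mul_self_sqrt hx0.le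
          field_simp
          linear_combination hxx
        calc Real.sqrt ((x - 0) * (b - x)) / x ≤ Real.sqrt (x * b) / x := by gcongr
          _ = Real.sqrt b * (1 / Real.sqrt x) := h2
    · apply ContinuousOn.intervalIntegrable
      apply ContinuousOn.div ((Real.continuous_sqrt.comp (by fun_prop)).continuousOn)
        continuousOn_id
      intro x hx
      rw [Set.uIcc_of_le hab.le] at hx
      exact ne_of_gt (lt_of_lt_of_le hapos hx.1)
  rw [intervalIntegral.integral_eq_sub_of_hasDerivAt_of_le hab.le hcont hderiv hint]
  have hFb : F b = (a + b) / 2 * (Real.pi / 2) - Real.sqrt (a * b) * (Real.pi / 2) := by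
    simp only [hF]
    have e1 : (2 * b - (a + b)) / (b - a) = 1 := by
      rw [show 2 * b - (a + b) = b - a by ring, div_self hd.ne']
    have e2 : ((a + b) * b - 2 * (a * b)) / ((b - a) * b) = 1 := by
      rw [show (a + b) * b - 2 * (a * b) = (b - a) * b by ring, div_self (by positivity)]
    rw [e1, e2, Real.arcsin_one, show (b - a) * (b - b) = 0 by ring, Real.sqrt_zero]
    ring
  have hFa : F a = (a + b) / 2 * (-(Real.pi / 2)) - Real.sqrt (a * b) * (-(Real.pi / 2)) := by
    simp only [hF]
    rcases eq_or_lt_of_le ha with ha0 | hapos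
    · obtain rfl : a = 0 := ha0.symm
      rw [show ((0:ℝ) + b) * 0 - 2 * (0 * b) = 0 by ring]
      rw [show (2 * (0:ℝ) - (0 + b)) / (b - 0) = -1 by
        rw [show 2 * (0:ℝ) - (0 + b) = -(b - 0) by ring, neg_div, div_self (by linarith)]]
      simp [Real.arcsin_neg_one]
    · have e1 : (2 * a - (a + b)) / (b - a) = -1 := by
        rw [show 2 * a - (a + b) = -(b - a) by ring, neg_div, div_self hd.ne']
      have e2 : ((a + b) * a - 2 * (a * b)) / ((b - a) * a) = -1 := by
        rw [show (a + b) * a - 2 * (a * b) = -((b - a) * a) by ring, neg_div,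
          div_self (by positivity)]
      rw [e1, e2, Real.arcsin_neg_one, show (a - a) * (b - a) = 0 by ring, Real.sqrt_zero]
      ring
  rw [hFb, hFa]
  ring


/-- The natural temperature of the Kepler problem:
`k_B T(E, g) = (2/T)·∫_{r₋}^{r₊} √(2m|E|)·√((r−r₋)(r₊−r))/r dr
= 2|E| − 2√2·|E|^{3/2}·L/(m^{3/2}·g)`. -/
theorem stmt_16
    (m g L E : ℝ) (hm : 0 < m) (hg : 0 < g) (hL : 0 ≤ L) (hE : E < 0)
    (hbound : 2 * |E| * L ^ 2 < m ^ 3 * g ^ 2)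
    (rm rp T : ℝ)
    (hrm : rm = (m * g - Real.sqrt ((m * g) ^ 2 - 2 * |E| * L ^ 2 / m)) / (2 * |E|))
    (hrp : rp = (m * g + Real.sqrt ((m * g) ^ 2 - 2 * |E| * L ^ 2 / m)) / (2 * |E|))
    (hT : T = 2 * Real.pi * m ^ ((3:ℝ)/2) * g / (2 * |E|) ^ ((3:ℝ)/2)) :
    (2 / T) *
      (∫ r in rm..rp, Real.sqrt (2 * m * |E|) * Real.sqrt ((r - rm) * (rp - r)) / r)
      = 2 * |E| - 2 * Real.sqrt 2 * |E| ^ ((3:ℝ)/2) * L / (m ^ ((3:ℝ)/2) * g) := by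
  set e := |E| with hedef
  have he : 0 < e := abs_pos.mpr hE.ne
  have hin : 0 < (m * g) ^ 2 - 2 * e * L ^ 2 / m := by
    have h1 : 2 * e * L ^ 2 / m < (m * g) ^ 2 := by
      rw [div_lt_iff₀ hm]
      nlinarith
    linarith
  set D := Real.sqrt ((m * g) ^ 2 - 2 * e * L ^ 2 / m) with hDdef
  have hD2 : D ^ 2 = (m * g) ^ 2 - 2 * e * L ^ 2 / m := Real.sq_sqrt hin.le
  have hDpos : 0 < D := Real.sqrt_pos.mpr hin
  have hDle : D ≤ m * g := by
    have h1 : D ≤ Real.sqrt ((m * g) ^ 2) := Real.sqrt_le_sqrt (by linarith [div_nonneg (by positivity : (0:ℝ) ≤ 2 * e * L ^ 2) hm.le])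
    rwa [Real.sqrt_sq (by positivity)] at h1
  have hrm0 : 0 ≤ rm := by
    rw [hrm]
    apply div_nonneg (by linarith) (by positivity)
  have hrmrp : rm < rp := by
    rw [hrm, hrp, div_lt_div_iff₀ (by positivity) (by positivity)]
    nlinarith
  -- rewrite the integral
  have hsum : rm + rp = m * g / e := by
    rw [hrm, hrp]
    field_simp
    ring
  have hD2' : D ^ 2 * m = (m * g) ^ 2 * m - 2 * e * L ^ 2 := by
    rw [hD2]
    field_simp
  have hprod : rm * rp = L ^ 2 / (2 * m * e) := by
    rw [hrm, hrp]
    field_simp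
    first
    | linear_combination (-e) * hD2'
    | linear_combination e * hD2'
    | linear_combination (e * m) * hD2'
    | linear_combination (-(e * m)) * hD2'
    | nlinarith [hD2']
  have hsqprod : Real.sqrt (rm * rp) = L / Real.sqrt (2 * m * e) := by
    rw [hprod, show L ^ 2 / (2 * m * e) = (L / Real.sqrt (2 * m * e)) ^ 2 by
      rw [div_pow, Real.sq_sqrt (by positivity)]]
    exact Real.sqrt_sq (by positivity)
  have hintrw : (∫ r in rm..rp, Real.sqrt (2 * m * e) * Real.sqrt ((r - rm) * (rp - r)) / r)
      = Real.sqrt (2 * m * e) * (Real.pi * ((rm + rp) / 2 - Real.sqrt (rm * rp))) := by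
    simp_rw [mul_div_assoc]
    rw [intervalIntegral.integral_const_mul, kepler_integral rm rp hrm0 hrmrp]
  rw [hintrw, hsum, hsqprod]
  -- rpow to sqrt
  have h32 : ∀ x : ℝ, 0 < x → x ^ ((3:ℝ)/2) = x * Real.sqrt x := by
    intro x hx
    rw [show (3:ℝ)/2 = 1 + 1/2 by norm_num, Real.rpow_add hx, Real.rpow_one,
      ← Real.sqrt_eq_rpow]
  rw [hT, h32 m hm, h32 (2 * e) (by positivity), h32 e he]
  -- sqrt atoms
  have hsplit1 : Real.sqrt (2 * m * e) = Real.sqrt 2 * Real.sqrt m * Real.sqrt e := by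
    rw [Real.sqrt_mul (by positivity), Real.sqrt_mul (by norm_num)]
  have hsplit2 : Real.sqrt (2 * e) = Real.sqrt 2 * Real.sqrt e := Real.sqrt_mul (by norm_num) e
  rw [hsplit1, hsplit2]
  set s2 := Real.sqrt 2 with hs2def
  set sm := Real.sqrt m with hsmdef
  set se := Real.sqrt e with hsedef
  have hs2pos : 0 < s2 := Real.sqrt_pos.mpr (by norm_num)
  have hsmpos : 0 < sm := Real.sqrt_pos.mpr hm
  have hsepos : 0 < se := Real.sqrt_pos.mpr he
  have hs22 : s2 ^ 2 = 2 := Real.sq_sqrt (by norm_num)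
  have hsm2 : sm ^ 2 = m := Real.sq_sqrt hm.le
  have hse2 : se ^ 2 = e := Real.sq_sqrt he.le
  rw [← hsm2, ← hse2, ← hs22]
  have hpi : Real.pi ≠ 0 := Real.pi_ne_zero
  field_simp
end

section
/- Let 0 < α ≤ β be real numbers. Then ∫_α^β √( (x − α)(β − x) )/x dx = π·( (α + β)/2 − √(αβ) ). -/
open Real Set

private lemma stmt_17_aux (α β : ℝ) (h0 : 0 < α) (hαβ : α < β) :
    (∫ x in α..β, Real.sqrt ((x - α) * (β - x)) / x)
      = Real.pi * ((α + β) / 2 - Real.sqrt (α * β)) := by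
  have hβ : 0 < β := lt_trans h0 hαβ
  have hs : 0 < β - α := sub_pos.mpr hαβ
  have hab : Real.sqrt (α * β) ^ 2 = α * β := Real.sq_sqrt (by positivity)
  set F : ℝ → ℝ := fun x => Real.sqrt ((x - α) * (β - x))
      + (α + β) / 2 * Real.arcsin ((2 * x - α - β) / (β - α))
      - Real.sqrt (α * β) * Real.arcsin (((α + β) * x - 2 * α * β) / ((β - α) * x))
    with hF
  have key : (∫ x in α..β, Real.sqrt ((x - α) * (β - x)) / x) = F β - F α := by
    apply intervalIntegral.integral_eq_sub_of_hasDerivAt_of_le hαβ.le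
    · -- continuity of F on Icc
      apply ContinuousOn.sub
      · apply ContinuousOn.add
        · exact (Real.continuous_sqrt.comp (by continuity)).continuousOn
        · exact (continuous_const.mul (Real.continuous_arcsin.comp (by continuity))).continuousOn
      · apply ContinuousOn.mul continuousOn_const
        apply Real.continuous_arcsin.comp_continuousOn
        apply ContinuousOn.div (by fun_prop) (by fun_prop)
        intro y hy
        exact mul_ne_zero hs.ne' (lt_of_lt_of_le h0 hy.1).ne'
    · -- derivative on Ioo
      intro x hx
      obtain ⟨hxα, hxβ⟩ := hx
      have hx0 : 0 < x := h0.trans hxα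
      have hxne : x ≠ 0 := hx0.ne'
      have hP : 0 < (x - α) * (β - x) := mul_pos (sub_pos.mpr hxα) (sub_pos.mpr hxβ)
      set f := Real.sqrt ((x - α) * (β - x)) with hfdef
      have hf : 0 < f := Real.sqrt_pos.mpr hP
      have hf2 : f ^ 2 = (x - α) * (β - x) := Real.sq_sqrt hP.le
      -- piece 1 : sqrt part
      have h1 : HasDerivAt (fun y => (y - α) * (β - y)) (α + β - 2 * x) x := by
        have := ((hasDerivAt_id x).sub_const α).mul
          ((hasDerivAt_const x β).sub (hasDerivAt_id x))
        refine this.congr_deriv ?_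
        simp [id]
        ring
      have hsq : HasDerivAt (fun y => Real.sqrt ((y - α) * (β - y)))
          (1 / (2 * f) * (α + β - 2 * x)) x :=
        (Real.hasDerivAt_sqrt hP.ne').comp x h1
      -- piece 2 : arcsin u
      have hu : HasDerivAt (fun y => (2 * y - α - β) / (β - α)) (2 / (β - α)) x := by
        have h : HasDerivAt (fun y : ℝ => 2 * y - α - β) 2 x := by
          simpa using (((hasDerivAt_id x).const_mul (2:ℝ)).sub_const α).sub_const β
        simpa using h.div_const (β - α)
      have hu1 : (2 * x - α - β) / (β - α) < 1 := by
        rw [div_lt_one hs]; linarith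
      have hu2 : -1 < (2 * x - α - β) / (β - α) := by
        rw [lt_div_iff₀ hs]; linarith
      have harcu : HasDerivAt (fun y => Real.arcsin ((2 * y - α - β) / (β - α)))
          (1 / Real.sqrt (1 - ((2 * x - α - β) / (β - α)) ^ 2) * (2 / (β - α))) x :=
        HasDerivAt.comp (h₂ := Real.arcsin) x (Real.hasDerivAt_arcsin hu2.ne' hu1.ne) hu
      have husp : Real.sqrt (1 - ((2 * x - α - β) / (β - α)) ^ 2) = 2 * f / (β - α) := by
        rw [show 1 - ((2 * x - α - β) / (β - α)) ^ 2 = (2 * f / (β - α)) ^ 2 by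
          field_simp
          linear_combination (-4:ℝ) * hf2]
        exact Real.sqrt_sq (by positivity)
      -- piece 3 : arcsin v
      have hden : (β - α) * x ≠ 0 := mul_ne_zero hs.ne' hxne
      have hdenpos : 0 < (β - α) * x := mul_pos hs hx0
      have hnum : HasDerivAt (fun y => (α + β) * y - 2 * α * β) (α + β) x := by
        simpa using ((hasDerivAt_id x).const_mul (α + β)).sub_const (2 * α * β)
      have hdenD : HasDerivAt (fun y => (β - α) * y) (β - α) x := by
        simpa using (hasDerivAt_id x).const_mul (β - α)
      have hv : HasDerivAt (fun y => ((α + β) * y - 2 * α * β) / ((β - α) * y))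
          (2 * α * β / ((β - α) * x ^ 2)) x := by
        have h := hnum.div hdenD hden
        refine h.congr_deriv ?_
        field_simp
        ring
      have hv1 : ((α + β) * x - 2 * α * β) / ((β - α) * x) < 1 := by
        rw [div_lt_one hdenpos]; nlinarith [mul_pos h0 (sub_pos.mpr hxβ)]
      have hv2 : -1 < ((α + β) * x - 2 * α * β) / ((β - α) * x) := by
        rw [lt_div_iff₀ hdenpos]; nlinarith [mul_pos hβ (sub_pos.mpr hxα)]
      have harcv : HasDerivAt
          (fun y => Real.arcsin (((α + β) * y - 2 * α * β) / ((β - α) * y)))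
          (1 / Real.sqrt (1 - (((α + β) * x - 2 * α * β) / ((β - α) * x)) ^ 2)
            * (2 * α * β / ((β - α) * x ^ 2))) x :=
        HasDerivAt.comp (h₂ := Real.arcsin) x (Real.hasDerivAt_arcsin hv2.ne' hv1.ne) hv
      have hg0 : 0 ≤ Real.sqrt (α * β) := Real.sqrt_nonneg _
      have hvsp : Real.sqrt (1 - (((α + β) * x - 2 * α * β) / ((β - α) * x)) ^ 2)
          = 2 * Real.sqrt (α * β) * f / ((β - α) * x) := by
        set g := Real.sqrt (α * β) with hg
        rw [show 1 - (((α + β) * x - 2 * α * β) / ((β - α) * x)) ^ 2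
            = (2 * g * f / ((β - α) * x)) ^ 2 by
          field_simp
          linear_combination (-4 * f ^ 2) * hab + (-4 * (α * β)) * hf2]
        exact Real.sqrt_sq
          (div_nonneg (mul_nonneg (mul_nonneg (by norm_num) hg0) hf.le) hdenpos.le)
      -- combine
      have total := (hsq.add (harcu.const_mul ((α + β) / 2))).sub
        (harcv.const_mul (Real.sqrt (α * β)))
      convert total using 1
      · rfl
      rw [husp, hvsp]
      set g := Real.sqrt (α * β) with hg
      have hgpos : 0 < g := Real.sqrt_pos.mpr (by positivity)
      field_simp
      linear_combination 2 * hf2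
    · -- integrability
      apply ContinuousOn.intervalIntegrable
      apply ContinuousOn.div
      · exact (Real.continuous_sqrt.comp (by continuity)).continuousOn
      · exact continuousOn_id
      · intro y hy
        rw [uIcc_of_le hαβ.le] at hy
        exact (lt_of_lt_of_le h0 hy.1).ne'
  rw [key]
  have eu1 : (2 * β - α - β) / (β - α) = 1 := by
    rw [show 2 * β - α - β = β - α by ring, div_self hs.ne']
  have eu2 : (2 * α - α - β) / (β - α) = -1 := by
    rw [show 2 * α - α - β = -(β - α) by ring, neg_div, div_self hs.ne']
  have ev1 : ((α + β) * β - 2 * α * β) / ((β - α) * β) = 1 := by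
    rw [show (α + β) * β - 2 * α * β = (β - α) * β by ring,
      div_self (mul_ne_zero hs.ne' hβ.ne')]
  have ev2 : ((α + β) * α - 2 * α * β) / ((β - α) * α) = -1 := by
    rw [show (α + β) * α - 2 * α * β = -((β - α) * α) by ring, neg_div,
      div_self (mul_ne_zero hs.ne' h0.ne')]
  rw [hF]
  simp only [eu1, eu2, ev1, ev2, Real.arcsin_one, Real.arcsin_neg_one, sub_self,
    mul_zero, zero_mul, Real.sqrt_zero]
  ring

/-- The definite integral underlying the Kepler adiabatic invariant and
temperature: for `0 < α ≤ β`,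
`∫_α^β √((x − α)(β − x))/x dx = π((α + β)/2 − √(αβ))`. -/
theorem stmt_17
    (α β : ℝ) (h0 : 0 < α) (hαβ : α ≤ β) :
    (∫ x in α..β, Real.sqrt ((x - α) * (β - x)) / x)
      = Real.pi * ((α + β) / 2 - Real.sqrt (α * β)) := by
  rcases eq_or_lt_of_le hαβ with rfl | h
  · simp [Real.sqrt_mul_self h0.le, intervalIntegral.integral_same]
  · exact stmt_17_aux α β h0 h
end
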